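/- arXiv:0807.1079 — 2 statements merged into one kernel-verified Lean document; each statement's English description precedes it below -/
import Mathlib

section
/- Let a ∈ F(r,Λ,A) satisfy a(t) ≥ t for all t ∈ [0,r) and supp(a) = (0, r). Let α₀ ∈ (0, r) ∩ A and set α_k = a^k(α₀) for k ∈ ℤ, so α₁ = a(α₀). Let b, d ∈ F(r,Λ,A) with supp(b) = supp(d) = (α₀, α₁), and assume d generates the centralizer of b in the subgroup F_{(α₀,α₁)}(r,Λ,A). For k ∈ ℤ write c_k = a^k ∘ b ∘ a^{−k} and e_k = a^k ∘ d ∘ a^{−k}. Then the centralizer in F(r,Λ,A) of the set {c_k : k ∈ ℤ} is exactly the subgroup generated by {e_k : k ∈ ℤ}. -/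
open Set

noncomputable section

/-- The multiplicative group of positive real numbers. -/
abbrev PosReal : Type := {x : ℝ // 0 < x}

namespace ThompsonStein

/-- The support of a permutation of `ℝ`: the set of non-fixed points. -/
def supp (f : Equiv.Perm ℝ) : Set ℝ := {t | f t ≠ t}

/-- The fixed-point set of a permutation of `ℝ`. -/
def fixSet (f : Equiv.Perm ℝ) : Set ℝ := {t | f t = t}

/-- Membership in the Stein–Thompson group `F(r, Λ, A)`, where elements of the group of
piecewise affine homeomorphisms of `[0, r)` are encoded as the permutations of `ℝ` fixing
every point outside `[0, r)`.  The conditions say: `f` fixes the complement of `[0, r)`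
(so it restricts to a bijection of `[0, r)`), it is strictly increasing and continuous on
`[0, r)`, and it is piecewise affine with respect to a finite subdivision
`0 = t 0 < t 1 < ⋯ < t n = r` whose points and their images lie in `A`, the slope of each
affine piece lying in `Λ`. -/
def MemF (r : ℝ) (Λ : Subgroup PosReal) (A : AddSubgroup ℝ) (f : Equiv.Perm ℝ) : Prop :=
  (∀ t : ℝ, t ∉ Set.Ico 0 r → f t = t) ∧
  StrictMonoOn f (Set.Ico 0 r) ∧
  ContinuousOn f (Set.Ico 0 r) ∧
  ∃ n : ℕ, ∃ t : Fin (n + 1) → ℝ,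
    StrictMono t ∧ t 0 = 0 ∧ t (Fin.last n) = r ∧
    (∀ i, t i ∈ A) ∧ (∀ i, f (t i) ∈ A) ∧
    ∀ i : Fin n, ∃ s : PosReal, s ∈ Λ ∧ ∃ c : ℝ,
      ∀ u ∈ Set.Icc (t i.castSucc) (t i.succ), f u = (s : ℝ) * u + c

/-- Membership in `F_S(r, Λ, A)`: the elements of `F(r, Λ, A)` with support contained
in `S`. -/
def MemFOn (r : ℝ) (Λ : Subgroup PosReal) (A : AddSubgroup ℝ) (S : Set ℝ)
    (f : Equiv.Perm ℝ) : Prop :=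
  MemF r Λ A f ∧ supp f ⊆ S

/-- `f` has right slope `s` at `γ`:  `f` is affine with slope `s` on some interval
`(γ, γ + ε)` to the right of `γ`. -/
def HasRightSlope (f : ℝ → ℝ) (γ s : ℝ) : Prop :=
  ∃ ε > (0 : ℝ), ∃ c : ℝ, ∀ u ∈ Set.Ioo γ (γ + ε), f u = s * u + c

/-- `f` has left slope `s` at `γ`:  `f` is affine with slope `s` on some interval
`(γ - ε, γ)` to the left of `γ`. -/
def HasLeftSlope (f : ℝ → ℝ) (γ s : ℝ) : Prop :=
  ∃ ε > (0 : ℝ), ∃ c : ℝ, ∀ u ∈ Set.Ioo (γ - ε) γ, f u = s * u + c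

end ThompsonStein

namespace ThompsonStein

variable {r : ℝ} {Λ : Subgroup PosReal} {A : AddSubgroup ℝ}

lemma perm_apply_inv_self (f : Equiv.Perm ℝ) (x : ℝ) : f (f⁻¹ x) = x :=
  Equiv.apply_symm_apply f x

lemma perm_inv_apply_self (f : Equiv.Perm ℝ) (x : ℝ) : f⁻¹ (f x) = x :=
  Equiv.symm_apply_apply f x

/-- `u` and `v` are adjacent elements of the finite set `T`. -/
def Adj (T : Finset ℝ) (u v : ℝ) : Prop :=
  u ∈ T ∧ v ∈ T ∧ u < v ∧ ∀ w ∈ T, w ≤ u ∨ v ≤ w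

/-- `f` is affine with slope in `Λ` on each pair of adjacent points of `T`. -/
def AffOn (Λ : Subgroup PosReal) (f : ℝ → ℝ) (T : Finset ℝ) : Prop :=
  ∀ u v, Adj T u v → ∃ s : PosReal, s ∈ Λ ∧ ∃ c : ℝ,
    ∀ x ∈ Set.Icc u v, f x = (s : ℝ) * x + c

def GoodT (r : ℝ) (A : AddSubgroup ℝ) (f : ℝ → ℝ) (T : Finset ℝ) : Prop :=
  (0:ℝ) ∈ T ∧ r ∈ T ∧ ↑T ⊆ Set.Icc (0:ℝ) r ∧ (∀ x ∈ T, x ∈ A) ∧ (∀ x ∈ T, f x ∈ A)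

/-- Alternative form of membership in `F(r,Λ,A)`. -/
def MemF' (r : ℝ) (Λ : Subgroup PosReal) (A : AddSubgroup ℝ) (f : Equiv.Perm ℝ) : Prop :=
  (∀ t : ℝ, t ∉ Set.Ico 0 r → f t = t) ∧ StrictMono ⇑f ∧
  ∃ T : Finset ℝ, GoodT r A ⇑f T ∧ AffOn Λ ⇑f T

lemma maps_ico {f : Equiv.Perm ℝ} (hfix : ∀ t : ℝ, t ∉ Set.Ico 0 r → f t = t)
    {t : ℝ} (ht : t ∈ Set.Ico 0 r) : f t ∈ Set.Ico 0 r := by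
  by_contra h
  have h1 : f (f t) = f t := hfix _ h
  have : (f : ℝ → ℝ) t = t := by
    have := congrArg f.symm h1
    simpa using this
  rw [this] at h; exact h ht

lemma strictMono_of_memF {f : Equiv.Perm ℝ}
    (hfix : ∀ t : ℝ, t ∉ Set.Ico 0 r → f t = t)
    (hmono : StrictMonoOn f (Set.Ico 0 r)) : StrictMono ⇑f := by
  intro x y hxy
  by_cases hx : x ∈ Set.Ico 0 r <;> by_cases hy : y ∈ Set.Ico 0 r
  · exact hmono hx hy hxy
  · -- x ∈ Ico, y ∉ Ico; then y ≥ r (since y > x ≥ 0)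
    have hyr : r ≤ y := by
      rcases not_and_or.mp hy with h | h
      · exact absurd (le_trans hx.1 hxy.le) h
      · exact le_of_not_gt h
    rw [hfix y hy]
    exact lt_of_lt_of_le (maps_ico hfix hx).2 hyr
  · have hx0 : x < 0 := by
      rcases not_and_or.mp hx with h | h
      · exact lt_of_not_ge h
      · exact absurd (lt_of_lt_of_le hxy (by rcases hy with ⟨_, h2⟩; exact le_of_lt h2)) (not_lt.mpr (le_of_not_gt h))
    rw [hfix x hx]
    exact lt_of_lt_of_le hx0 (maps_ico hfix hy).1
  · rw [hfix x hx, hfix y hy]; exact hxy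

lemma continuous_of_perm_strictMono {f : Equiv.Perm ℝ} (h : StrictMono ⇑f) :
    Continuous ⇑f := (StrictMono.orderIsoOfSurjective f h f.surjective).continuous

lemma strictMono_inv {f : Equiv.Perm ℝ} (h : StrictMono ⇑f) : StrictMono ⇑f⁻¹ := by
  intro x y hxy
  rcases lt_trichotomy ((f⁻¹:Equiv.Perm ℝ) x) ((f⁻¹:Equiv.Perm ℝ) y) with h1 | h1 | h1
  · exact h1
  · exfalso; have := congrArg f h1; simp at this; exact absurd this hxy.ne
  · exfalso
    have := h h1
    simp only [Equiv.Perm.inv_def, Equiv.apply_symm_apply] at this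
    exact absurd this (not_lt.mpr hxy.le)


lemma exists_adj_cover {T : Finset ℝ} {x : ℝ}
    (h0 : ∃ w ∈ T, w ≤ x) (h1 : ∃ w ∈ T, x < w) :
    ∃ p q, Adj T p q ∧ p ≤ x ∧ x < q := by
  classical
  obtain ⟨w0, hw0T, hw0⟩ := h0
  obtain ⟨w1, hw1T, hw1⟩ := h1
  set Tl := T.filter (fun w => w ≤ x) with hTl
  set Tr := T.filter (fun w => x < w) with hTr
  have hTlne : Tl.Nonempty := ⟨w0, Finset.mem_filter.mpr ⟨hw0T, hw0⟩⟩
  have hTrne : Tr.Nonempty := ⟨w1, Finset.mem_filter.mpr ⟨hw1T, hw1⟩⟩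
  refine ⟨Tl.max' hTlne, Tr.min' hTrne, ⟨?_, ?_, ?_, ?_⟩, ?_, ?_⟩
  · exact (Finset.mem_filter.mp (Tl.max'_mem hTlne)).1
  · exact (Finset.mem_filter.mp (Tr.min'_mem hTrne)).1
  · exact lt_of_le_of_lt (Finset.mem_filter.mp (Tl.max'_mem hTlne)).2
      (Finset.mem_filter.mp (Tr.min'_mem hTrne)).2
  · intro w hw
    by_cases hwx : w ≤ x
    · exact Or.inl (Tl.le_max' w (Finset.mem_filter.mpr ⟨hw, hwx⟩))
    · exact Or.inr (Tr.min'_le w (Finset.mem_filter.mpr ⟨hw, lt_of_not_ge hwx⟩))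
  · exact (Finset.mem_filter.mp (Tl.max'_mem hTlne)).2
  · exact (Finset.mem_filter.mp (Tr.min'_mem hTrne)).2

/-- Each adjacent pair of a superset is contained in an adjacent pair of the subset,
given elements of the subset below and above. -/
lemma adj_extend {S T : Finset ℝ} (hST : S ⊆ T) {u v : ℝ} (hadj : Adj T u v)
    (h0 : ∃ w ∈ S, w ≤ u) (h1 : ∃ w ∈ S, v ≤ w) :
    ∃ p q, Adj S p q ∧ p ≤ u ∧ v ≤ q := by
  obtain ⟨w1, hw1S, hw1⟩ := h1
  obtain ⟨p, q, hpq, hpu, huq⟩ := exists_adj_cover h0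
    ⟨w1, hw1S, lt_of_lt_of_le hadj.2.2.1 hw1⟩
  refine ⟨p, q, hpq, hpu, ?_⟩
  rcases hadj.2.2.2 q (hST hpq.2.1) with h | h
  · exact absurd h (not_le.mpr huq)
  · exact h

lemma affOn_superset {f : ℝ → ℝ} {S T : Finset ℝ} (hAff : AffOn Λ f S) (hST : S ⊆ T)
    (h0 : (0:ℝ) ∈ S) (hrS : r ∈ S) (hT : ↑T ⊆ Set.Icc (0:ℝ) r) : AffOn Λ f T := by
  intro u v hadj
  obtain ⟨p, q, hpq, hpu, hvq⟩ := adj_extend hST hadj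
    ⟨0, h0, (hT hadj.1).1⟩ ⟨r, hrS, (hT hadj.2.1).2⟩
  obtain ⟨s, hs, c, hc⟩ := hAff p q hpq
  exact ⟨s, hs, c, fun x hx => hc x ⟨le_trans hpu hx.1, le_trans hx.2 hvq⟩⟩

lemma memF_iff_memF' {f : Equiv.Perm ℝ} :
    MemF r Λ A f ↔ MemF' r Λ A f := by
  constructor
  · rintro ⟨hfix, hmono, hcont, n, t, htm, ht0, htl, htA, htfA, haff⟩
    have hgm : StrictMono ⇑f := strictMono_of_memF hfix hmono
    refine ⟨hfix, hgm, Finset.image t Finset.univ, ⟨?_, ?_, ?_, ?_, ?_⟩, ?_⟩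
    · exact Finset.mem_image.mpr ⟨0, Finset.mem_univ _, ht0⟩
    · exact Finset.mem_image.mpr ⟨Fin.last n, Finset.mem_univ _, htl⟩
    · rintro x hx
      simp only [Finset.coe_image, Set.mem_image] at hx
      obtain ⟨i, _, rfl⟩ := hx
      exact ⟨ht0 ▸ htm.monotone (Fin.zero_le i), htl ▸ htm.monotone (Fin.le_last i)⟩
    · intro x hx; obtain ⟨i, _, rfl⟩ := Finset.mem_image.mp hx; exact htA i
    · intro x hx; obtain ⟨i, _, rfl⟩ := Finset.mem_image.mp hx; exact htfA i
    · rintro u v ⟨huT, hvT, huv, hadj⟩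
      obtain ⟨i, _, rfl⟩ := Finset.mem_image.mp huT
      obtain ⟨j, _, rfl⟩ := Finset.mem_image.mp hvT
      have hij : i < j := htm.lt_iff_lt.mp huv
      have hin : (i : ℕ) < n := lt_of_lt_of_le hij (Nat.lt_succ_iff.mp j.isLt)
      set i' : Fin n := ⟨i, hin⟩ with hi'
      have hci : i'.castSucc = i := rfl
      have hsj : t i'.succ = t j := by
        have h1 : t i < t i'.succ := htm (by simp [Fin.lt_def, hi'])
        rcases hadj (t i'.succ) (Finset.mem_image.mpr ⟨i'.succ, Finset.mem_univ _, rfl⟩) with h | h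
        · exact absurd h (not_le.mpr h1)
        · have h2 : i'.succ ≤ j := by
            simp only [Fin.le_def, Fin.val_succ]; exact hij
          exact le_antisymm (htm.monotone h2) h
      obtain ⟨s, hs, c, hc⟩ := haff i'
      exact ⟨s, hs, c, fun x hx => hc x ⟨hx.1, hsj ▸ hx.2⟩⟩
  · rintro ⟨hfix, hgm, T, ⟨h0T, hrT, hTIcc, hTA, hTfA⟩, hAff⟩
    have hcont := continuous_of_perm_strictMono hgm
    refine ⟨hfix, hgm.strictMonoOn _, hcont.continuousOn, ?_⟩
    classical
    have hcard : T.card ≠ 0 := Finset.card_ne_zero_of_mem h0T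
    obtain ⟨n, hn⟩ : ∃ n, T.card = n + 1 := ⟨T.card - 1, by omega⟩
    set e := T.orderIsoOfFin hn with he
    set t : Fin (n+1) → ℝ := fun i => (e i : ℝ) with htdef
    have htmem : ∀ i, t i ∈ T := fun i => (e i).2
    have htm : StrictMono t := fun i j hij => by
      have := e.strictMono hij
      exact this
    have hsurj : ∀ x ∈ T, ∃ i, t i = x := by
      intro x hx
      exact ⟨e.symm ⟨x, hx⟩, congrArg Subtype.val (e.apply_symm_apply ⟨x, hx⟩)⟩
    have ht0 : t 0 = 0 := by
      obtain ⟨i, hi⟩ := hsurj 0 h0T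
      have h1 : t 0 ≤ t i := htm.monotone (Fin.zero_le i)
      have h2 : (0:ℝ) ≤ t 0 := (hTIcc (htmem 0)).1
      rw [hi] at h1; linarith
    have htl : t (Fin.last n) = r := by
      obtain ⟨i, hi⟩ := hsurj r hrT
      have h1 : t i ≤ t (Fin.last n) := htm.monotone (Fin.le_last i)
      have h2 : t (Fin.last n) ≤ r := (hTIcc (htmem _)).2
      rw [hi] at h1; linarith
    refine ⟨n, t, htm, ht0, htl, fun i => hTA _ (htmem i), fun i => hTfA _ (htmem i), ?_⟩
    intro i
    apply hAff
    refine ⟨htmem _, htmem _, htm (Fin.castSucc_lt_succ (i := i)), ?_⟩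
    intro w hw
    obtain ⟨j, rfl⟩ := hsurj w hw
    rcases le_or_gt (j : ℕ) (i : ℕ) with h | h
    · exact Or.inl (htm.monotone (by simpa [Fin.le_def] using h))
    · exact Or.inr (htm.monotone (by simpa [Fin.le_def, Fin.val_succ] using h))


lemma memF'_apply_zero {f : Equiv.Perm ℝ} (hf : MemF' r Λ A f) : f 0 = 0 := by
  rcases le_or_gt r 0 with h | h
  · exact hf.1 0 (fun hmem => absurd hmem.2 (not_lt.mpr h))
  · have h0 : f 0 ∈ Set.Ico 0 r := maps_ico hf.1 ⟨le_refl 0, h⟩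
    by_contra hne
    have hpos : 0 < f 0 := lt_of_le_of_ne h0.1 (Ne.symm hne)
    obtain ⟨s, hs⟩ := f.surjective 0
    have hs0 : 0 < s := by
      by_contra hle
      push_neg at hle
      rcases eq_or_lt_of_le hle with h1 | h1
      · rw [h1] at hs; exact hne hs
      · have := hf.1 s (by simp [Set.mem_Ico]; intro; linarith)
        rw [hs] at this; linarith
    have := hf.2.1 hs0
    rw [hs] at this; linarith

lemma memF'_apply_r {f : Equiv.Perm ℝ} (hf : MemF' r Λ A f) : f r = r :=
  hf.1 r (by simp [Set.mem_Ico])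

lemma memF'_maps_icc {f : Equiv.Perm ℝ} (hf : MemF' r Λ A f)
    {x : ℝ} (hx : x ∈ Set.Icc 0 r) : f x ∈ Set.Icc 0 r :=
  ⟨memF'_apply_zero hf ▸ hf.2.1.monotone hx.1, memF'_apply_r hf ▸ hf.2.1.monotone hx.2⟩

lemma memF'_mapsA (hΛA : ∀ s : PosReal, s ∈ Λ → ∀ a : ℝ, a ∈ A → (s : ℝ) * a ∈ A)
    {f : Equiv.Perm ℝ} (hf : MemF' r Λ A f) {x : ℝ} (hxA : x ∈ A)
    (hx : x ∈ Set.Icc 0 r) : f x ∈ A := by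
  obtain ⟨T, ⟨h0T, hrT, hTIcc, hTA, hTfA⟩, hAff⟩ := hf.2.2
  rcases eq_or_lt_of_le hx.2 with h | h
  · rw [h, memF'_apply_r hf]; exact hTA r hrT
  obtain ⟨p, q, hpq, hpx, hxq⟩ := exists_adj_cover (T := T) ⟨0, h0T, hx.1⟩ ⟨r, hrT, h⟩
  obtain ⟨s, hs, c, hc⟩ := hAff p q hpq
  have h1 : f x = (s:ℝ) * x + c := hc x ⟨hpx, hxq.le⟩
  have h2 : f p = (s:ℝ) * p + c := hc p ⟨le_refl _, (lt_of_le_of_lt hpx hxq).le⟩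
  have : f x = (s:ℝ) * x - (s:ℝ) * p + f p := by rw [h1, h2]; ring
  rw [this]
  exact A.add_mem (A.sub_mem (hΛA s hs x hxA) (hΛA s hs p (hTA p hpq.1))) (hTfA p hpq.1)

lemma memF'_one (hr : 0 < r) (hrA : r ∈ A) : MemF' r Λ A (1 : Equiv.Perm ℝ) := by
  refine ⟨fun t _ => rfl, fun x y h => h, {0, r}, ⟨?_, ?_, ?_, ?_, ?_⟩, ?_⟩
  · simp
  · simp
  · intro x hx
    simp only [Finset.coe_insert, Finset.coe_singleton, Set.mem_insert_iff,
      Set.mem_singleton_iff] at hx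
    rcases hx with rfl | rfl <;> simp [Set.mem_Icc, hr.le]
  · intro x hx
    simp only [Finset.mem_insert, Finset.mem_singleton] at hx
    rcases hx with rfl | rfl
    · exact A.zero_mem
    · exact hrA
  · intro x hx
    simp only [Finset.mem_insert, Finset.mem_singleton] at hx
    rcases hx with rfl | rfl
    · simpa using A.zero_mem
    · simpa using hrA
  · intro u v _
    exact ⟨1, Λ.one_mem, 0, fun x _ => by simp⟩

lemma memF'_inv {f : Equiv.Perm ℝ} (hf : MemF' r Λ A f) : MemF' r Λ A f⁻¹ := by
  obtain ⟨hfix, hgm, T, ⟨h0T, hrT, hTIcc, hTA, hTfA⟩, hAff⟩ := hf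
  have hginv : StrictMono ⇑f⁻¹ := strictMono_inv hgm
  refine ⟨?_, hginv, T.image ⇑f, ⟨?_, ?_, ?_, ?_, ?_⟩, ?_⟩
  · intro t ht
    have := hfix t ht
    exact (Equiv.symm_apply_eq f).mpr this.symm
  · exact Finset.mem_image.mpr ⟨0, h0T, memF'_apply_zero ⟨hfix, hgm, T, ⟨h0T, hrT, hTIcc, hTA, hTfA⟩, hAff⟩⟩
  · exact Finset.mem_image.mpr ⟨r, hrT, memF'_apply_r ⟨hfix, hgm, T, ⟨h0T, hrT, hTIcc, hTA, hTfA⟩, hAff⟩⟩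
  · intro x hx
    simp only [Finset.coe_image, Set.mem_image] at hx
    obtain ⟨w, hw, rfl⟩ := hx
    exact memF'_maps_icc ⟨hfix, hgm, T, ⟨h0T, hrT, hTIcc, hTA, hTfA⟩, hAff⟩ (hTIcc hw)
  · intro x hx
    obtain ⟨w, hw, rfl⟩ := Finset.mem_image.mp hx
    exact hTfA w hw
  · intro x hx
    obtain ⟨w, hw, rfl⟩ := Finset.mem_image.mp hx
    simpa using hTA w hw
  · rintro u v ⟨huT, hvT, huv, hadj⟩
    obtain ⟨p, hp, rfl⟩ := Finset.mem_image.mp huT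
    obtain ⟨q, hq, rfl⟩ := Finset.mem_image.mp hvT
    have hpq : p < q := hgm.lt_iff_lt.mp huv
    have hadj' : Adj T p q := by
      refine ⟨hp, hq, hpq, fun w hw => ?_⟩
      rcases hadj (f w) (Finset.mem_image.mpr ⟨w, hw, rfl⟩) with h | h
      · exact Or.inl (hgm.le_iff_le.mp h)
      · exact Or.inr (hgm.le_iff_le.mp h)
    obtain ⟨s, hs, c, hc⟩ := hAff p q hadj'
    refine ⟨s⁻¹, Λ.inv_mem hs, -c * (s:ℝ)⁻¹, ?_⟩
    intro x hx
    have hx1 : (f⁻¹ : Equiv.Perm ℝ) x ∈ Set.Icc p q := by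
      constructor
      · have : (f⁻¹ : Equiv.Perm ℝ) (f p) ≤ (f⁻¹ : Equiv.Perm ℝ) x := hginv.monotone hx.1
        simpa using this
      · have : (f⁻¹ : Equiv.Perm ℝ) x ≤ (f⁻¹ : Equiv.Perm ℝ) (f q) := hginv.monotone hx.2
        simpa using this
    have h1 : f ((f⁻¹ : Equiv.Perm ℝ) x) = (s:ℝ) * ((f⁻¹ : Equiv.Perm ℝ) x) + c :=
      hc _ hx1
    simp only [Equiv.Perm.inv_def, Equiv.apply_symm_apply] at h1
    have hs0 : (s:ℝ) ≠ 0 := ne_of_gt s.2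
    have hinv : (f⁻¹ : Equiv.Perm ℝ) x = f.symm x := rfl
    have hcoe : ((s⁻¹ : PosReal):ℝ) = (s:ℝ)⁻¹ := rfl
    have h4 : f.symm x = (x - c) / (s:ℝ) := by rw [eq_div_iff hs0]; linarith [h1]
    rw [hinv, hcoe, h4]
    field_simp
    ring

lemma memF'_mul {f g : Equiv.Perm ℝ}
    (hΛA : ∀ s : PosReal, s ∈ Λ → ∀ a : ℝ, a ∈ A → (s : ℝ) * a ∈ A)
    (hf : MemF' r Λ A f) (hg : MemF' r Λ A g) : MemF' r Λ A (f * g) := by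
  obtain ⟨T_f, hTf, hAf⟩ := hf.2.2
  obtain ⟨T_g, hTg, hAg⟩ := hg.2.2
  have hginv := memF'_inv hg
  classical
  set T : Finset ℝ := T_g ∪ T_f.image ⇑g⁻¹ with hTdef
  have hTIcc : ↑T ⊆ Set.Icc (0:ℝ) r := by
    intro x hx
    simp only [hTdef, Finset.coe_union, Set.mem_union, Finset.coe_image, Set.mem_image] at hx
    rcases hx with h | ⟨w, hw, rfl⟩
    · exact hTg.2.2.1 h
    · exact memF'_maps_icc hginv (hTf.2.2.1 hw)
  have hmono : StrictMono ⇑(f * g) := fun x y h => hf.2.1 (hg.2.1 h)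
  refine ⟨?_, hmono, T, ⟨?_, ?_, hTIcc, ?_, ?_⟩, ?_⟩
  · intro t ht
    simp only [Equiv.Perm.mul_apply]
    rw [hg.1 t ht, hf.1 t ht]
  · exact Finset.mem_union_left _ hTg.1
  · exact Finset.mem_union_left _ hTg.2.1
  · intro x hx
    rcases Finset.mem_union.mp hx with h | h
    · exact hTg.2.2.2.1 x h
    · obtain ⟨w, hw, rfl⟩ := Finset.mem_image.mp h
      exact memF'_mapsA hΛA hginv (hTf.2.2.2.1 w hw) (hTf.2.2.1 hw)
  · intro x hx
    rcases Finset.mem_union.mp hx with h | h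
    · simp only [Equiv.Perm.mul_apply]
      exact memF'_mapsA hΛA hf (hTg.2.2.2.2 x h)
        (memF'_maps_icc hg (hTg.2.2.1 h))
    · obtain ⟨w, hw, rfl⟩ := Finset.mem_image.mp h
      simp only [Equiv.Perm.mul_apply]
      have : g ((g⁻¹ : Equiv.Perm ℝ) w) = w := by simp
      rw [this]
      exact hTf.2.2.2.2 w hw
  · -- affinity
    have hAgT : AffOn Λ (⇑g) T := affOn_superset hAg (Finset.subset_union_left)
      hTg.1 hTg.2.1 hTIcc
    rintro u v hadj
    obtain ⟨s₁, hs₁, c₁, hc₁⟩ := hAgT u v hadj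
    -- g u, g v adjacent in image of T under g; T_f ⊆ image of T under g
    have hTfsub : T_f ⊆ T.image ⇑g := by
      intro w hw
      refine Finset.mem_image.mpr ⟨(g⁻¹ : Equiv.Perm ℝ) w, ?_, by simp⟩
      exact Finset.mem_union_right _ (Finset.mem_image.mpr ⟨w, hw, rfl⟩)
    have hadj' : Adj (T.image ⇑g) (g u) (g v) := by
      refine ⟨Finset.mem_image.mpr ⟨u, hadj.1, rfl⟩, Finset.mem_image.mpr ⟨v, hadj.2.1, rfl⟩,
        hg.2.1 hadj.2.2.1, fun w hw => ?_⟩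
      obtain ⟨p, hp, rfl⟩ := Finset.mem_image.mp hw
      rcases hadj.2.2.2 p hp with h | h
      · exact Or.inl (hg.2.1.monotone h)
      · exact Or.inr (hg.2.1.monotone h)
    obtain ⟨p, q, hpq, hpu, hvq⟩ := adj_extend hTfsub hadj'
      ⟨0, hTf.1, (memF'_maps_icc hg (hTIcc hadj.1)).1⟩
      ⟨r, hTf.2.1, (memF'_maps_icc hg (hTIcc hadj.2.1)).2⟩
    obtain ⟨s₂, hs₂, c₂, hc₂⟩ := hAf p q hpq
    refine ⟨s₂ * s₁, Λ.mul_mem hs₂ hs₁, (s₂:ℝ) * c₁ + c₂, ?_⟩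
    intro x hx
    have hgx : g x ∈ Set.Icc p q := by
      constructor
      · exact le_trans hpu (hg.2.1.monotone hx.1)
      · exact le_trans (hg.2.1.monotone hx.2) hvq
    simp only [Equiv.Perm.mul_apply]
    rw [hc₂ _ hgx, hc₁ _ hx]
    show (s₂:ℝ) * ((s₁:ℝ) * x + c₁) + c₂ = ((s₂ * s₁ : PosReal):ℝ) * x + ((s₂:ℝ) * c₁ + c₂)
    have : ((s₂ * s₁ : PosReal):ℝ) = (s₂:ℝ) * (s₁:ℝ) := rfl
    rw [this]; ring


lemma memF'_zpow (hr : 0 < r) (hrA : r ∈ A)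
    (hΛA : ∀ s : PosReal, s ∈ Λ → ∀ a : ℝ, a ∈ A → (s : ℝ) * a ∈ A)
    {f : Equiv.Perm ℝ} (hf : MemF' r Λ A f) (k : ℤ) : MemF' r Λ A (f ^ k) := by
  induction k using Int.induction_on with
  | zero => simpa using memF'_one hr hrA
  | succ n ih => rw [zpow_add_one]; exact memF'_mul hΛA ih hf
  | pred n ih => rw [zpow_sub_one]; exact memF'_mul hΛA ih (memF'_inv hf)

lemma supp_conj (f g : Equiv.Perm ℝ) : supp (g * f * g⁻¹) = ⇑g '' supp f := by
  ext x
  simp only [supp, Set.mem_setOf_eq, Set.mem_image, Equiv.Perm.mul_apply]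
  constructor
  · intro h
    refine ⟨(g⁻¹ : Equiv.Perm ℝ) x, ?_, by simp⟩
    intro hfix
    apply h
    rw [hfix]; simp
  · rintro ⟨w, hw, rfl⟩
    simp only [perm_inv_apply_self]
    intro h
    exact hw (g.injective h)

lemma perm_image_Ioo {f : Equiv.Perm ℝ} (h : StrictMono ⇑f) (p q : ℝ) :
    ⇑f '' Set.Ioo p q = Set.Ioo (f p) (f q) := by
  ext x
  constructor
  · rintro ⟨w, hw, rfl⟩
    exact ⟨h hw.1, h hw.2⟩
  · intro hx
    refine ⟨(f⁻¹ : Equiv.Perm ℝ) x, ⟨?_, ?_⟩, by simp⟩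
    · have := strictMono_inv h hx.1; simpa using this
    · have := strictMono_inv h hx.2; simpa using this

lemma Ioo_eq_Ioo_endpoints {p q p' q' : ℝ} (hpq : p < q)
    (h : Set.Ioo p q = Set.Ioo p' q') : p = p' ∧ q = q' := by
  have hne : (Set.Ioo p' q').Nonempty := h ▸ Set.nonempty_Ioo.mpr hpq
  have hpq' : p' < q' := Set.nonempty_Ioo.mp hne
  constructor
  · rw [← csInf_Ioo hpq, ← csInf_Ioo hpq', h]
  · rw [← csSup_Ioo hpq, ← csSup_Ioo hpq', h]

/-- The restriction of a permutation preserving `(p, q)` to `(p, q)`. -/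
def restrictPerm (f : Equiv.Perm ℝ) (p q : ℝ)
    (h : ∀ x, f x ∈ Set.Ioo p q ↔ x ∈ Set.Ioo p q) : Equiv.Perm ℝ where
  toFun := fun x => if x ∈ Set.Ioo p q then f x else x
  invFun := fun x => if x ∈ Set.Ioo p q then (f⁻¹ : Equiv.Perm ℝ) x else x
  left_inv := by
    intro x
    beta_reduce
    by_cases hx : x ∈ Set.Ioo p q
    · rw [if_pos hx, if_pos ((h x).mpr hx)]; simp
    · rw [if_neg hx, if_neg hx]
  right_inv := by
    intro x
    beta_reduce
    by_cases hx : x ∈ Set.Ioo p q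
    · have hx' : (f⁻¹ : Equiv.Perm ℝ) x ∈ Set.Ioo p q := by
        apply (h _).mp; simpa using hx
      rw [if_pos hx, if_pos hx']; simp
    · rw [if_neg hx, if_neg hx]

lemma restrictPerm_apply (f : Equiv.Perm ℝ) (p q : ℝ) (h) (x : ℝ) :
    restrictPerm f p q h x = if x ∈ Set.Ioo p q then f x else x := rfl

lemma restrictPerm_supp (f : Equiv.Perm ℝ) (p q : ℝ) (h) :
    supp (restrictPerm f p q h) ⊆ Set.Ioo p q := by
  intro x hx
  by_contra hxn
  exact hx (by rw [restrictPerm_apply, if_neg hxn])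

lemma mem_Ioo_iff_of_fixed {f : Equiv.Perm ℝ} (hm : StrictMono ⇑f) {p q : ℝ}
    (hp : f p = p) (hq : f q = q) : ∀ x, f x ∈ Set.Ioo p q ↔ x ∈ Set.Ioo p q := by
  intro x
  simp only [Set.mem_Ioo]
  constructor
  · rintro ⟨h1, h2⟩
    rw [← hp] at h1; rw [← hq] at h2
    exact ⟨hm.lt_iff_lt.mp h1, hm.lt_iff_lt.mp h2⟩
  · rintro ⟨h1, h2⟩
    exact ⟨hp ▸ hm h1, hq ▸ hm h2⟩

lemma memF'_restrictPerm (hr : 0 < r) (hrA : r ∈ A) {f : Equiv.Perm ℝ}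
    (hf : MemF' r Λ A f) {p q : ℝ} (hpq : p < q) (hpA : p ∈ A) (hqA : q ∈ A)
    (hpI : p ∈ Set.Icc 0 r) (hqI : q ∈ Set.Icc 0 r) (hfp : f p = p) (hfq : f q = q) :
    MemF' r Λ A (restrictPerm f p q (mem_Ioo_iff_of_fixed hf.2.1 hfp hfq)) := by
  classical
  set g := restrictPerm f p q (mem_Ioo_iff_of_fixed hf.2.1 hfp hfq) with hg
  have hgapp : ∀ x, g x = if x ∈ Set.Ioo p q then f x else x := fun x => rfl
  have hIoosub : Set.Ioo p q ⊆ Set.Ico 0 r :=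
    fun x hx => ⟨le_trans hpI.1 hx.1.le, lt_of_lt_of_le hx.2 hqI.2⟩
  -- g agrees with f on [p, q]
  have hgf : ∀ x ∈ Set.Icc p q, g x = f x := by
    intro x hx
    rw [hgapp]
    by_cases h : x ∈ Set.Ioo p q
    · rw [if_pos h]
    · rw [if_neg h]
      rcases eq_or_lt_of_le hx.1 with h1 | h1
      · rw [← h1, hfp]
      · rcases eq_or_lt_of_le hx.2 with h2 | h2
        · rw [h2, hfq]
        · exact absurd ⟨h1, h2⟩ h
  have hgmono : StrictMono ⇑g := by
    intro x y hxy
    rw [hgapp, hgapp]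
    by_cases hx : x ∈ Set.Ioo p q <;> by_cases hy : y ∈ Set.Ioo p q
    · rw [if_pos hx, if_pos hy]; exact hf.2.1 hxy
    · rw [if_pos hx, if_neg hy]
      have hyq : q ≤ y := by
        by_contra hlt
        exact hy ⟨lt_trans hx.1 hxy, lt_of_not_ge hlt⟩
      calc f x < f q := hf.2.1 hx.2
        _ = q := hfq
        _ ≤ y := hyq
    · rw [if_neg hx, if_pos hy]
      have hxp : x ≤ p := by
        by_contra hlt
        exact hx ⟨lt_of_not_ge hlt, lt_trans hxy hy.2⟩
      calc x ≤ p := hxp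
        _ = f p := hfp.symm
        _ < f y := hf.2.1 hy.1
    · rw [if_neg hx, if_neg hy]; exact hxy
  obtain ⟨T_f, hTf, hAf⟩ := hf.2.2
  set T : Finset ℝ := T_f ∪ {0, p, q, r} with hT
  have hTsub : ↑T ⊆ Set.Icc (0:ℝ) r := by
    intro x hx
    simp only [hT, Finset.coe_union, Set.mem_union, Finset.coe_insert, Set.mem_insert_iff,
      Finset.coe_singleton, Set.mem_singleton_iff] at hx
    rcases hx with h | h | h | h | h
    · exact hTf.2.2.1 h
    all_goals first
      | (subst h; exact ⟨le_refl _, hr.le⟩)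
      | (subst h; exact hpI)
      | (subst h; exact hqI)
      | (subst h; exact ⟨hr.le, le_refl _⟩)
  have hAfT : AffOn Λ (⇑f) T := affOn_superset hAf Finset.subset_union_left hTf.1 hTf.2.1 hTsub
  have hpT : p ∈ T := by simp [hT]
  have hqT : q ∈ T := by simp [hT]
  refine ⟨?_, hgmono, T, ⟨?_, ?_, hTsub, ?_, ?_⟩, ?_⟩
  · intro t ht
    rw [hgapp, if_neg (fun hmem => ht (hIoosub hmem))]
  · simp [hT]
  · simp [hT]
  · intro x hx
    rcases Finset.mem_union.mp hx with h | h
    · exact hTf.2.2.2.1 x h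
    · simp only [Finset.mem_insert, Finset.mem_singleton] at h
      rcases h with rfl | rfl | rfl | rfl
      exacts [A.zero_mem, hpA, hqA, hrA]
  · intro x hx
    rw [hgapp]
    by_cases h : x ∈ Set.Ioo p q
    · rw [if_pos h]
      rcases Finset.mem_union.mp hx with h' | h'
      · exact hTf.2.2.2.2 x h'
      · simp only [Finset.mem_insert, Finset.mem_singleton] at h'
        rcases h' with rfl | rfl | rfl | rfl
        · exact absurd h (by simp [Set.mem_Ioo]; intro h0; linarith [hpI.1])
        · exact absurd h (by simp)
        · exact absurd h (by simp)
        · exact absurd h (by simp [Set.mem_Ioo]; intro h0; linarith [hqI.2])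
    · rw [if_neg h]
      rcases Finset.mem_union.mp hx with h' | h'
      · exact hTf.2.2.2.1 x h'
      · simp only [Finset.mem_insert, Finset.mem_singleton] at h'
        rcases h' with rfl | rfl | rfl | rfl
        exacts [A.zero_mem, hpA, hqA, hrA]
  · intro u v hadj
    rcases hadj.2.2.2 p hpT with hup | hvp
    swap
    · -- v ≤ p : g is the identity on [u, v]
      refine ⟨1, Λ.one_mem, 0, fun x hx => ?_⟩
      rw [hgapp, if_neg (fun hmem => absurd (le_trans hx.2 hvp) (not_le.mpr hmem.1))]
      simp
    rcases hadj.2.2.2 q hqT with hqu | hvq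
    · -- q ≤ u : g is the identity on [u, v]
      refine ⟨1, Λ.one_mem, 0, fun x hx => ?_⟩
      rw [hgapp, if_neg (fun hmem => absurd (le_trans hqu hx.1) (not_le.mpr hmem.2))]
      simp
    · -- p ≤ u, v ≤ q : g = f on [u, v]
      obtain ⟨s, hs, c, hc⟩ := hAfT u v hadj
      refine ⟨s, hs, c, fun x hx => ?_⟩
      rw [hgf x ⟨le_trans hup hx.1, le_trans hx.2 hvq⟩]
      exact hc x hx



/-- Let `a ∈ F(r,Λ,A)` with `a t ≥ t` on `[0, r)` and `supp a = (0, r)`.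
Let `α₀ ∈ (0, r) ∩ A` and `α₁ = a α₀`.  Let `b, d ∈ F(r,Λ,A)` with
`supp b = supp d = (α₀, α₁)`, and assume `d` generates the centralizer of `b` in
`F_{(α₀,α₁)}(r,Λ,A)`.  With `c k = a^k * b * a^{-k}` and `e k = a^k * d * a^{-k}`, the
centralizer in `F(r,Λ,A)` of `{c k : k ∈ ℤ}` is exactly the subgroup generated by
`{e k : k ∈ ℤ}`. -/
theorem centralizer_of_conjugates_eq_closure_of_conjugates
    (r : ℝ) (hr : 0 < r) (Λ : Subgroup PosReal) (hΛ : Λ ≠ ⊥)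
    (A : AddSubgroup ℝ) (hrA : r ∈ A)
    (hΛA : ∀ s : PosReal, s ∈ Λ → ∀ a : ℝ, a ∈ A → (s : ℝ) * a ∈ A)
    (a : Equiv.Perm ℝ) (ha : MemF r Λ A a)
    (haid : ∀ t ∈ Set.Ico (0 : ℝ) r, t ≤ a t)
    (hasupp : supp a = Set.Ioo 0 r)
    (α₀ : ℝ) (hα₀ : α₀ ∈ Set.Ioo (0 : ℝ) r) (hα₀A : α₀ ∈ A)
    (b d : Equiv.Perm ℝ) (hb : MemF r Λ A b) (hd : MemF r Λ A d)
    (hbsupp : supp b = Set.Ioo α₀ (a α₀)) (hdsupp : supp d = Set.Ioo α₀ (a α₀))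
    (hdgen : {y : Equiv.Perm ℝ | MemFOn r Λ A (Set.Ioo α₀ (a α₀)) y ∧ Commute b y}
      = {y : Equiv.Perm ℝ | ∃ n : ℤ, y = d ^ n}) :
    {y : Equiv.Perm ℝ | MemF r Λ A y ∧ ∀ k : ℤ, Commute (a ^ k * b * (a ^ k)⁻¹) y}
      = ((Subgroup.closure (Set.range fun k : ℤ => a ^ k * d * (a ^ k)⁻¹) :
          Subgroup (Equiv.Perm ℝ)) : Set (Equiv.Perm ℝ)) := by
  classical
  have ha' : MemF' r Λ A a := memF_iff_memF'.mp ha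
  have hb' : MemF' r Λ A b := memF_iff_memF'.mp hb
  have hd' : MemF' r Λ A d := memF_iff_memF'.mp hd
  have hma : StrictMono ⇑a := ha'.2.1
  have ha0 : a 0 = 0 := memF'_apply_zero ha'
  have har : a r = r := memF'_apply_r ha'
  have hagt : ∀ t ∈ Set.Ioo (0:ℝ) r, t < a t := by
    intro t ht
    have hne : a t ≠ t := by rw [← hasupp] at ht; exact ht
    exact lt_of_le_of_ne (haid t ⟨ht.1.le, ht.2⟩) (Ne.symm hne)
  set α : ℤ → ℝ := fun k => (a ^ k : Equiv.Perm ℝ) α₀ with hα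
  have hαzero : α 0 = α₀ := by simp [hα]
  have hαsucc : ∀ k, α (k + 1) = a (α k) := by
    intro k
    show (a ^ (k+1) : Equiv.Perm ℝ) α₀ = a ((a ^ k : Equiv.Perm ℝ) α₀)
    rw [add_comm, zpow_add, zpow_one, Equiv.Perm.mul_apply]
  have hpow : ∀ k j : ℤ, (a ^ k : Equiv.Perm ℝ) (α j) = α (k + j) := by
    intro k j
    show (a ^ k : Equiv.Perm ℝ) ((a ^ j : Equiv.Perm ℝ) α₀) = (a ^ (k+j) : Equiv.Perm ℝ) α₀
    rw [zpow_add, Equiv.Perm.mul_apply]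
  have hα1 : α 1 = a α₀ := by rw [show (1:ℤ) = 0 + 1 by ring, hαsucc, hαzero]
  have hainv0 : (a⁻¹ : Equiv.Perm ℝ) 0 = 0 := by
    apply a.injective; simp only [perm_apply_inv_self]; exact ha0.symm
  have hainvr : (a⁻¹ : Equiv.Perm ℝ) r = r := by
    apply a.injective; simp only [perm_apply_inv_self]; exact har.symm
  have hmainv : StrictMono ⇑(a⁻¹ : Equiv.Perm ℝ) := strictMono_inv hma
  have haIoo : ∀ t ∈ Set.Ioo (0:ℝ) r, a t ∈ Set.Ioo 0 r :=
    fun t ht => ⟨ha0 ▸ hma ht.1, har ▸ hma ht.2⟩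
  have hainvIoo : ∀ t ∈ Set.Ioo (0:ℝ) r, (a⁻¹ : Equiv.Perm ℝ) t ∈ Set.Ioo 0 r :=
    fun t ht => ⟨hainv0 ▸ hmainv ht.1, hainvr ▸ hmainv ht.2⟩
  have hαmem : ∀ k, α k ∈ Set.Ioo (0:ℝ) r := by
    intro k
    induction k using Int.induction_on with
    | zero => rw [hαzero]; exact hα₀
    | succ n ih => rw [hαsucc]; exact haIoo _ ih
    | pred n ih =>
      have h1 : α (-(n:ℤ) - 1) = (a⁻¹ : Equiv.Perm ℝ) (α (-n)) := by
        apply a.injective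
        rw [← hαsucc (-(n:ℤ) - 1), sub_add_cancel]
        simp
      rw [h1]; exact hainvIoo _ ih
  have hαlt : ∀ k, α k < α (k + 1) := fun k => by
    rw [hαsucc]; exact hagt _ (hαmem k)
  have hαmono : StrictMono α := strictMono_int_of_lt_succ hαlt
  have hαA : ∀ k, α k ∈ A := by
    intro k
    induction k using Int.induction_on with
    | zero => rw [hαzero]; exact hα₀A
    | succ n ih =>
      rw [hαsucc]
      exact memF'_mapsA hΛA ha' ih ⟨(hαmem _).1.le, (hαmem _).2.le⟩
    | pred n ih =>
      have h1 : α (-(n:ℤ) - 1) = (a⁻¹ : Equiv.Perm ℝ) (α (-n)) := by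
        apply a.injective
        rw [← hαsucc (-(n:ℤ) - 1), sub_add_cancel]
        simp
      rw [h1]
      exact memF'_mapsA hΛA (memF'_inv ha') ih ⟨(hαmem _).1.le, (hαmem _).2.le⟩
  -- limits
  have hca : Continuous ⇑a := continuous_of_perm_strictMono hma
  have hsupα : ∀ p < r, ∃ k : ℤ, p < α k := by
    intro p hp
    set β : ℕ → ℝ := fun n => α n with hβ
    have hβm : Monotone β := fun m n h => hαmono.monotone (by exact_mod_cast h)
    have hβbdd : BddAbove (Set.range β) := ⟨r, by rintro x ⟨n, rfl⟩; exact (hαmem n).2.le⟩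
    set L := ⨆ n, β n with hL
    have hLt : Filter.Tendsto β Filter.atTop (nhds L) := tendsto_atTop_ciSup hβm hβbdd
    have h1 : Filter.Tendsto (fun n => a (β n)) Filter.atTop (nhds (a L)) :=
      (hca.tendsto L).comp hLt
    have h2 : (fun n => a (β n)) = fun n => β (n + 1) := by
      funext n
      show a (α n) = α ((n:ℤ) + 1)
      rw [hαsucc]
    have h3 : Filter.Tendsto (fun n => β (n + 1)) Filter.atTop (nhds L) :=
      hLt.comp (Filter.tendsto_add_atTop_nat 1)
    have haL : a L = L := tendsto_nhds_unique (h2 ▸ h1) h3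
    have hL0 : α₀ ≤ L := by
      have := le_ciSup hβbdd 0
      rwa [show β 0 = α₀ by rw [hβ]; exact_mod_cast hαzero] at this
    have hLr : L ≤ r := ciSup_le fun n => (hαmem n).2.le
    have hLeq : L = r := by
      by_contra hne
      have hIoo : L ∈ Set.Ioo (0:ℝ) r := ⟨lt_of_lt_of_le hα₀.1 hL0, lt_of_le_of_ne hLr hne⟩
      exact absurd haL (ne_of_gt (hagt L hIoo))
    obtain ⟨n, hn⟩ := exists_lt_of_lt_ciSup (show p < ⨆ n, β n by rw [← hL, hLeq]; exact hp)
    exact ⟨n, hn⟩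
  have hinfα : ∀ q > (0:ℝ), ∃ k : ℤ, α k < q := by
    intro q hq
    set γ : ℕ → ℝ := fun n => α (-n) with hγ
    have hγm : Antitone γ := fun m n h => hαmono.monotone (by simp; exact_mod_cast h)
    have hγbdd : BddBelow (Set.range γ) := ⟨0, by rintro x ⟨n, rfl⟩; exact (hαmem _).1.le⟩
    set M := ⨅ n, γ n with hM
    have hMt : Filter.Tendsto γ Filter.atTop (nhds M) := tendsto_atTop_ciInf hγm hγbdd
    have h0 : Filter.Tendsto (fun n => γ (n + 1)) Filter.atTop (nhds M) :=
      hMt.comp (Filter.tendsto_add_atTop_nat 1)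
    have h1 : Filter.Tendsto (fun n => a (γ (n + 1))) Filter.atTop (nhds (a M)) :=
      (hca.tendsto M).comp h0
    have h2 : (fun n => a (γ (n + 1))) = fun n => γ n := by
      funext n
      show a (α (-((n:ℕ)+1:ℕ))) = α (-n)
      rw [← hαsucc]
      congr 1
      push_cast
      ring
    have haM : a M = M := by
      rw [h2] at h1
      exact tendsto_nhds_unique h1 hMt
    have hM0 : 0 ≤ M := le_ciInf fun n => (hαmem _).1.le
    have hMr : M ≤ α₀ := by
      have := ciInf_le hγbdd 0
      rwa [show γ 0 = α₀ by rw [hγ]; simpa using hαzero] at this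
    have hMeq : M = 0 := by
      by_contra hne
      have hIoo : M ∈ Set.Ioo (0:ℝ) r :=
        ⟨lt_of_le_of_ne hM0 (Ne.symm hne), lt_of_le_of_lt hMr hα₀.2⟩
      exact absurd haM (ne_of_gt (hagt M hIoo))
    obtain ⟨n, hn⟩ := exists_lt_of_ciInf_lt (show (⨅ n, γ n) < q by rw [← hM, hMeq]; exact hq)
    exact ⟨-n, hn⟩
  -- supports of conjugates
  have hpow' : ∀ k : ℤ, MemF' r Λ A (a ^ k) := memF'_zpow hr hrA hΛA ha'
  have hsuppc : ∀ k : ℤ, supp (a ^ k * b * (a ^ k)⁻¹) = Set.Ioo (α k) (α (k+1)) := by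
    intro k
    rw [supp_conj, hbsupp, ← hα1, ← hαzero, perm_image_Ioo (hpow' k).2.1, hpow, hpow,
      add_zero]
  have hsuppe : ∀ k : ℤ, supp (a ^ k * d * (a ^ k)⁻¹) = Set.Ioo (α k) (α (k+1)) := by
    intro k
    rw [supp_conj, hdsupp, ← hα1, ← hαzero, perm_image_Ioo (hpow' k).2.1, hpow, hpow,
      add_zero]
  have hbd : Commute b d := by
    have hmem : d ∈ {y : Equiv.Perm ℝ | ∃ n : ℤ, y = d ^ n} := ⟨1, (zpow_one d).symm⟩
    rw [← hdgen] at hmem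
    exact hmem.2
  set E : Set (Equiv.Perm ℝ) := Set.range fun k : ℤ => a ^ k * d * (a ^ k)⁻¹ with hE
  set K : Subgroup (Equiv.Perm ℝ) :=
    { carrier := {y | MemF' r Λ A y ∧ ∀ k : ℤ, Commute (a ^ k * b * (a ^ k)⁻¹) y}
      one_mem' := ⟨memF'_one hr hrA, fun _ => Commute.one_right _⟩
      mul_mem' := fun hx hy => ⟨memF'_mul hΛA hx.1 hy.1, fun k => (hx.2 k).mul_right (hy.2 k)⟩
      inv_mem' := fun hx => ⟨memF'_inv hx.1, fun k => (hx.2 k).inv_right⟩ } with hK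
  have hKmem : ∀ y : Equiv.Perm ℝ,
      y ∈ K ↔ MemF' r Λ A y ∧ ∀ k : ℤ, Commute (a ^ k * b * (a ^ k)⁻¹) y := fun y => Iff.rfl
  have hEK : Subgroup.closure E ≤ K := by
    rw [Subgroup.closure_le]
    rintro y ⟨k, rfl⟩
    refine ⟨memF'_mul hΛA (memF'_mul hΛA (hpow' k) hd') (memF'_inv (hpow' k)), ?_⟩
    intro j
    by_cases hjk : j = k
    · subst hjk
      have h := hbd.map (MulAut.conj (a ^ j)).toMonoidHom
      simp only [MulEquiv.coe_toMonoidHom, MulAut.conj_apply] at h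
      simpa [mul_assoc] using h
    · have hdis : (a ^ j * b * (a ^ j)⁻¹).Disjoint (a ^ k * d * (a ^ k)⁻¹) := by
        intro x
        by_cases h1 : (a ^ j * b * (a ^ j)⁻¹) x = x
        · exact Or.inl h1
        · right
          have hx1 : x ∈ Set.Ioo (α j) (α (j+1)) := by
            rw [← hsuppc j]; exact h1
          by_contra h2
          have hx2 : x ∈ Set.Ioo (α k) (α (k+1)) := by
            rw [← hsuppe k]; exact h2
          rcases lt_or_gt_of_ne hjk with h | h
          · have : α (j + 1) ≤ α k := hαmono.monotone (by omega)
            have := hx1.2; have := hx2.1; linarith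
          · have : α (k + 1) ≤ α j := hαmono.monotone (by omega)
            have := hx1.1; have := hx2.2; linarith
      exact hdis.commute
  have hard : ∀ y : Equiv.Perm ℝ, y ∈ K → y ∈ Subgroup.closure E := by
    intro y hyK
    obtain ⟨hy', hyc⟩ := (hKmem y).mp hyK
    have hym : StrictMono ⇑y := hy'.2.1
    -- y fixes each α k
    have hyα : ∀ k, y (α k) = α k := by
      intro k
      have hconj : y * (a ^ k * b * (a ^ k)⁻¹) * y⁻¹ = a ^ k * b * (a ^ k)⁻¹ := by
        have h := (hyc k).eq
        calc y * (a ^ k * b * (a ^ k)⁻¹) * y⁻¹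
            = (a ^ k * b * (a ^ k)⁻¹) * y * y⁻¹ := by rw [← h]
          _ = a ^ k * b * (a ^ k)⁻¹ := by group
      have himg := supp_conj (a ^ k * b * (a ^ k)⁻¹) y
      rw [hconj, hsuppc k, perm_image_Ioo hym] at himg
      exact ((Ioo_eq_Ioo_endpoints (hαlt k) himg).1).symm
    -- b fixes its endpoints
    have hbm : StrictMono ⇑b := hb'.2.1
    have hbα₀ : b (α 0) = α 0 := by
      by_contra h
      have hmem : α 0 ∈ supp b := h
      rw [hbsupp, ← hαzero] at hmem
      exact lt_irrefl _ hmem.1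
    have hbα₁ : b (α 1) = α 1 := by
      by_contra h
      have hmem : α 1 ∈ supp b := h
      rw [hbsupp, ← hα1] at hmem
      exact lt_irrefl _ hmem.2
    -- restriction to a single interval lies in the closure
    have hIffgen : ∀ (p q : ℤ), ∀ x : ℝ,
        y x ∈ Set.Ioo (α p) (α q) ↔ x ∈ Set.Ioo (α p) (α q) :=
      fun p q => mem_Ioo_iff_of_fixed hym (hyα p) (hyα q)
    have hone : ∀ m : ℤ,
        restrictPerm y (α m) (α (m+1)) (hIffgen m (m+1)) ∈ Subgroup.closure E := by
      intro m
      set w : Equiv.Perm ℝ := (a ^ m)⁻¹ * y * a ^ m with hwdef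
      have hw' : MemF' r Λ A w :=
        memF'_mul hΛA (memF'_mul hΛA (memF'_inv (hpow' m)) hy') (hpow' m)
      have hwm : StrictMono ⇑w := hw'.2.1
      have hwapp : ∀ x, w x = ((a ^ m)⁻¹ : Equiv.Perm ℝ) (y ((a ^ m : Equiv.Perm ℝ) x)) := by
        intro x; rw [hwdef]; simp [Equiv.Perm.mul_apply]
      have hpinv : ∀ j : ℤ, ((a ^ m)⁻¹ : Equiv.Perm ℝ) (α j) = α (j - m) := by
        intro j
        apply (a ^ m : Equiv.Perm ℝ).injective
        rw [perm_apply_inv_self, hpow]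
        congr 1; ring
      have hwα₀ : w (α 0) = α 0 := by
        rw [hwapp, hpow, hyα, hpinv]; congr 1; ring
      have hwα₁ : w (α 1) = α 1 := by
        rw [hwapp, hpow, hyα, hpinv]; congr 1; ring
      set z : Equiv.Perm ℝ :=
        restrictPerm w (α 0) (α 1) (mem_Ioo_iff_of_fixed hwm hwα₀ hwα₁) with hzdef
      have hzap : ∀ u : ℝ, z u = if u ∈ Set.Ioo (α 0) (α 1) then w u else u := fun u => rfl
      have h01 : α 0 < α 1 := by simpa using hαlt 0
      have hz' : MemF' r Λ A z :=
        memF'_restrictPerm hr hrA hw' h01 (hαA 0) (hαA 1)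
          ⟨(hαmem 0).1.le, (hαmem 0).2.le⟩ ⟨(hαmem 1).1.le, (hαmem 1).2.le⟩ hwα₀ hwα₁
      have hbIff : ∀ x : ℝ, b x ∈ Set.Ioo (α 0) (α 1) ↔ x ∈ Set.Ioo (α 0) (α 1) :=
        mem_Ioo_iff_of_fixed hbm hbα₀ hbα₁
      have hcombw : Commute b w := by
        have h := (hyc m).map (MulAut.conj ((a ^ m)⁻¹ : Equiv.Perm ℝ)).toMonoidHom
        simp only [MulEquiv.coe_toMonoidHom, MulAut.conj_apply] at h
        have e1 : (a ^ m)⁻¹ * (a ^ m * b * (a ^ m)⁻¹) * ((a ^ m)⁻¹)⁻¹ = b := by group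
        have e2 : (a ^ m)⁻¹ * y * ((a ^ m)⁻¹)⁻¹ = w := by rw [hwdef]; group
        rwa [e1, e2] at h
      have hzb : Commute b z := by
        refine Equiv.ext fun x => ?_
        simp only [Equiv.Perm.mul_apply]
        by_cases hx : x ∈ Set.Ioo (α 0) (α 1)
        · have hbx : b x ∈ Set.Ioo (α 0) (α 1) := (hbIff x).mpr hx
          rw [hzap, hzap, if_pos hx, if_pos hbx]
          have h := congrArg (fun g : Equiv.Perm ℝ => g x) hcombw.eq
          simpa [Equiv.Perm.mul_apply] using h
        · have hbx : b x = x := by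
            by_contra h
            have hmem : x ∈ supp b := h
            rw [hbsupp, ← hα1, ← hαzero] at hmem
            exact hx hmem
          rw [hzap, hzap, if_neg hx, hbx, if_neg hx]
      have hzsupp : supp z ⊆ Set.Ioo α₀ (a α₀) := by
        have heqI : Set.Ioo (α 0) (α 1) = Set.Ioo α₀ (a α₀) := by rw [hαzero, hα1]
        exact heqI ▸ restrictPerm_supp w (α 0) (α 1) _
      have hzmem : z ∈ {y : Equiv.Perm ℝ | ∃ n : ℤ, y = d ^ n} := by
        rw [← hdgen]
        exact ⟨⟨memF_iff_memF'.mpr hz', hzsupp⟩, hzb⟩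
      obtain ⟨n, hzn⟩ := hzmem
      have hmm : StrictMono ⇑(a ^ m : Equiv.Perm ℝ) := (hpow' m).2.1
      have hmminv : StrictMono ⇑((a ^ m)⁻¹ : Equiv.Perm ℝ) := strictMono_inv hmm
      have hyconj : a ^ m * z * (a ^ m)⁻¹ = restrictPerm y (α m) (α (m+1)) (hIffgen m (m+1)) := by
        refine Equiv.ext fun x => ?_
        simp only [Equiv.Perm.mul_apply, restrictPerm_apply]
        have hiff : ((a ^ m)⁻¹ : Equiv.Perm ℝ) x ∈ Set.Ioo (α 0) (α 1) ↔
            x ∈ Set.Ioo (α m) (α (m+1)) := by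
          constructor
          · rintro ⟨h1, h2⟩
            have g1 := hmm h1
            have g2 := hmm h2
            rw [perm_apply_inv_self, hpow] at g1
            rw [perm_apply_inv_self, hpow] at g2
            rw [add_zero] at g1
            exact ⟨g1, g2⟩
          · rintro ⟨h1, h2⟩
            have g1 := hmminv h1
            have g2 := hmminv h2
            rw [hpinv] at g1
            rw [hpinv] at g2
            have e1 : m - m = 0 := by ring
            have e2 : m + 1 - m = 1 := by ring
            rw [e1] at g1
            rw [e2] at g2
            exact ⟨g1, g2⟩
        by_cases hx : x ∈ Set.Ioo (α m) (α (m+1))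
        · rw [if_pos hx, hzap, if_pos (hiff.mpr hx), hwapp, perm_apply_inv_self,
            perm_apply_inv_self]
        · rw [if_neg hx, hzap, if_neg (fun hmem => hx (hiff.mp hmem)),
            perm_apply_inv_self]
      rw [← hyconj, hzn]
      have hem : (a ^ m * d * (a ^ m)⁻¹ : Equiv.Perm ℝ) ∈ Subgroup.closure E :=
        Subgroup.subset_closure ⟨m, rfl⟩
      have hzp : a ^ m * d ^ n * (a ^ m)⁻¹ = (a ^ m * d * (a ^ m)⁻¹) ^ n := by
        have h := map_zpow (MulAut.conj (a ^ m : Equiv.Perm ℝ)).toMonoidHom d n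
        simp only [MulEquiv.coe_toMonoidHom, MulAut.conj_apply] at h
        exact h
      rw [hzp]
      exact Subgroup.zpow_mem _ hem n
    -- identity near the endpoints
    obtain ⟨T, ⟨h0T, hrT, hTIcc, hTA, hTfA⟩, hAffy⟩ := hy'.2.2
    obtain ⟨klo, hlow⟩ : ∃ k : ℤ, ∀ x, 0 ≤ x → x ≤ α k → y x = x := by
      obtain ⟨p, q, hadj, hp0, h0q⟩ :=
        exists_adj_cover (T := T) ⟨0, h0T, le_refl 0⟩ ⟨r, hrT, hr⟩
      obtain ⟨k, hk⟩ := hinfα q h0q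
      have hk1 : α (k - 1) < α k := hαmono (by omega)
      obtain ⟨s, hs, c, hcy⟩ := hAffy p q hadj
      have hq1 : α (k - 1) < q := lt_trans hk1 hk
      have e1 : (s:ℝ) * α (k - 1) + c = α (k - 1) := by
        have := hcy (α (k - 1)) ⟨le_trans hp0 (hαmem _).1.le, hq1.le⟩
        rw [hyα] at this
        linarith [this]
      have e2 : (s:ℝ) * α k + c = α k := by
        have := hcy (α k) ⟨le_trans hp0 (hαmem _).1.le, hk.le⟩
        rw [hyα] at this
        linarith [this]
      have hΔ : α k - α (k - 1) ≠ 0 := ne_of_gt (by linarith)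
      have hs1 : (s:ℝ) = 1 := by
        have h := mul_right_cancel₀ hΔ
          (show (s:ℝ) * (α k - α (k - 1)) = 1 * (α k - α (k - 1)) by push_cast; nlinarith [e1, e2])
        exact h
      have hc0 : c = 0 := by rw [hs1] at e2; linarith
      refine ⟨k - 1, fun x hx0 hxk => ?_⟩
      have := hcy x ⟨le_trans hp0 hx0, le_trans hxk hq1.le⟩
      rw [hs1, hc0] at this
      simpa using this
    obtain ⟨khi, hhigh⟩ : ∃ k : ℤ, ∀ x, α k ≤ x → x < r → y x = x := by
      have hTlne : (T.filter (fun w => w < r)).Nonempty :=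
        ⟨0, Finset.mem_filter.mpr ⟨h0T, hr⟩⟩
      set u := (T.filter (fun w => w < r)).max' hTlne with hu
      have huT : u ∈ T := (Finset.mem_filter.mp ((T.filter _).max'_mem hTlne)).1
      have hur : u < r := (Finset.mem_filter.mp ((T.filter _).max'_mem hTlne)).2
      obtain ⟨p, q, hadj, hpu, huq⟩ :=
        exists_adj_cover (T := T) ⟨u, huT, le_refl u⟩ ⟨r, hrT, hur⟩
      have hqr : q = r := by
        rcases lt_or_ge q r with h | h
        · have hqmem : q ∈ T.filter (fun w => w < r) := Finset.mem_filter.mpr ⟨hadj.2.1, h⟩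
          have hqle : q ≤ u := by
            rw [hu]
            exact Finset.le_max' _ q hqmem
          exact absurd hqle (not_le.mpr huq)
        · exact le_antisymm (hTIcc hadj.2.1).2 h
      obtain ⟨k, hk⟩ := hsupα p (lt_of_le_of_lt hpu hur)
      obtain ⟨s, hs, c, hcy⟩ := hAffy p q hadj
      have hk1 : α k < α (k + 1) := hαlt k
      have e1 : (s:ℝ) * α k + c = α k := by
        have := hcy (α k) ⟨hk.le, by rw [hqr]; exact (hαmem _).2.le⟩
        rw [hyα] at this
        linarith [this]
      have e2 : (s:ℝ) * α (k + 1) + c = α (k + 1) := by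
        have := hcy (α (k + 1)) ⟨le_trans hk.le hk1.le, by rw [hqr]; exact (hαmem _).2.le⟩
        rw [hyα] at this
        linarith [this]
      have hΔ : α (k + 1) - α k ≠ 0 := ne_of_gt (by linarith)
      have hs1 : (s:ℝ) = 1 := by
        exact mul_right_cancel₀ hΔ
          (show (s:ℝ) * (α (k + 1) - α k) = 1 * (α (k + 1) - α k) by nlinarith [e1, e2])
      have hc0 : c = 0 := by rw [hs1] at e2; linarith
      refine ⟨k, fun x hxk hxr => ?_⟩
      have := hcy x ⟨le_trans hk.le hxk, by rw [hqr]; exact hxr.le⟩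
      rw [hs1, hc0] at this
      simpa using this
    set mlo := min klo khi with hmlo
    set mhi := max klo khi with hmhi
    have hlow' : ∀ x, 0 ≤ x → x ≤ α mlo → y x = x := fun x h1 h2 =>
      hlow x h1 (le_trans h2 (hαmono.monotone (min_le_left _ _)))
    have hhigh' : ∀ x, α mhi ≤ x → y x = x := by
      intro x h1
      by_cases hxr : x < r
      · exact hhigh x (le_trans (hαmono.monotone (le_max_right _ _)) h1) hxr
      · exact hy'.1 x (fun hmem => hxr hmem.2)
    -- induction over the intervals
    have key : ∀ n : ℤ, mlo ≤ n →
        restrictPerm y (α mlo) (α n) (hIffgen mlo n) ∈ Subgroup.closure E := by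
      refine fun n => Int.leInduction
        (motive := fun k _ => restrictPerm y (α mlo) (α k) (hIffgen mlo k) ∈ Subgroup.closure E)
        ?_ ?_ n
      · show restrictPerm y (α mlo) (α mlo) (hIffgen mlo mlo) ∈ Subgroup.closure E
        have hid : restrictPerm y (α mlo) (α mlo) (hIffgen mlo mlo) = 1 := by
          refine Equiv.ext fun x => ?_
          rw [restrictPerm_apply, if_neg]
          · rfl
          · rintro ⟨h1, h2⟩
            exact absurd (lt_trans h1 h2) (lt_irrefl _)
        rw [hid]
        exact Subgroup.one_mem _
      · intro n hn ih
        show restrictPerm y (α mlo) (α (n+1)) (hIffgen mlo (n+1)) ∈ Subgroup.closure E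
        have hmn : α mlo ≤ α n := hαmono.monotone hn
        have hstep : restrictPerm y (α mlo) (α (n+1)) (hIffgen mlo (n+1)) =
            restrictPerm y (α mlo) (α n) (hIffgen mlo n) *
              restrictPerm y (α n) (α (n+1)) (hIffgen n (n+1)) := by
          refine Equiv.ext fun x => ?_
          simp only [Equiv.Perm.mul_apply, restrictPerm_apply]
          by_cases hbig : x ∈ Set.Ioo (α mlo) (α (n+1))
          · rw [if_pos hbig]
            rcases lt_trichotomy x (α n) with h | h | h
            · have h1 : x ∈ Set.Ioo (α mlo) (α n) := ⟨hbig.1, h⟩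
              have h2 : x ∉ Set.Ioo (α n) (α (n+1)) :=
                fun hmem => absurd h (not_lt.mpr hmem.1.le)
              rw [if_neg h2, if_pos h1]
            · have h2 : x ∉ Set.Ioo (α n) (α (n+1)) :=
                fun hmem => absurd hmem.1 (not_lt.mpr h.le)
              have h1 : x ∉ Set.Ioo (α mlo) (α n) :=
                fun hmem => absurd hmem.2 (not_lt.mpr h.ge)
              rw [if_neg h2, if_neg h1, h, hyα]
            · have h2 : x ∈ Set.Ioo (α n) (α (n+1)) := ⟨h, hbig.2⟩
              have hyx : y x ∈ Set.Ioo (α n) (α (n+1)) := (hIffgen n (n+1) x).mpr h2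
              have h1 : y x ∉ Set.Ioo (α mlo) (α n) :=
                fun hmem => absurd hyx.1 (not_lt.mpr hmem.2.le)
              rw [if_pos h2, if_neg h1]
          · rw [if_neg hbig]
            have h2 : x ∉ Set.Ioo (α n) (α (n+1)) :=
              fun hmem => hbig ⟨lt_of_le_of_lt hmn hmem.1, hmem.2⟩
            have h1 : x ∉ Set.Ioo (α mlo) (α n) :=
              fun hmem => hbig ⟨hmem.1, lt_trans hmem.2 (hαlt n)⟩
            rw [if_neg h2, if_neg h1]
        rw [hstep]
        exact Subgroup.mul_mem _ ih (hone n)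
    have hyeq : y = restrictPerm y (α mlo) (α mhi) (hIffgen mlo mhi) := by
      refine Equiv.ext fun x => ?_
      rw [restrictPerm_apply]
      by_cases hx : x ∈ Set.Ioo (α mlo) (α mhi)
      · rw [if_pos hx]
      · rw [if_neg hx]
        by_cases hx0 : x < 0
        · exact hy'.1 x (fun hmem => absurd hmem.1 (not_le.mpr hx0))
        · push_neg at hx0
          rcases le_or_gt x (α mlo) with h | h
          · exact hlow' x hx0 h
          · have h2 : α mhi ≤ x := by
              by_contra hcon
              exact hx ⟨h, lt_of_not_ge hcon⟩
            exact hhigh' x h2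
    rw [hyeq]
    exact key mhi min_le_max
  ext y
  simp only [Set.mem_setOf_eq, SetLike.mem_coe]
  constructor
  · intro hy
    exact hard y ((hKmem y).mpr ⟨memF_iff_memF'.mp hy.1, hy.2⟩)
  · intro hy
    have := (hKmem y).mp (hEK hy)
    exact ⟨memF_iff_memF'.mpr this.1, this.2⟩


end ThompsonStein
end
end

section
/- Let α, β ∈ [0, r] ∩ A with α < β, and set I = (α, β). Let x ∈ F_I(r,Λ,A) satisfy fix(x) ∩ I ∩ A = ∅. Then the set fix(x) ∩ I is finite, and for every element y ≠ id of the centralizer of x in F_I(r,Λ,A), one has fix(y) ∩ I = fix(x) ∩ I. -/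
open Set

noncomputable section

namespace ThompsonStein

open Filter in


lemma exists_piece_left {n : ℕ} {t : Fin (n + 1) → ℝ} {d : ℝ}
    (h0 : t 0 < d) (h1 : d ≤ t (Fin.last n)) :
    ∃ i : Fin n, t i.castSucc < d ∧ d ≤ t i.succ := by
  classical
  have hne : (Finset.univ.filter (fun i : Fin (n + 1) => t i < d)).Nonempty :=
    ⟨0, by simpa using h0⟩
  set j := (Finset.univ.filter (fun i : Fin (n + 1) => t i < d)).max' hne with hj
  have hjmem : t j < d := by
    have := (Finset.univ.filter (fun i : Fin (n + 1) => t i < d)).max'_mem hne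
    simpa using this
  have hjlast : j ≠ Fin.last n := by
    intro h
    rw [h] at hjmem
    exact absurd h1 (not_le.mpr hjmem)
  have hjlt : (j : ℕ) < n := by
    have := Fin.lt_last_iff_ne_last.mpr hjlast
    simpa [Fin.lt_iff_val_lt_val] using this
  refine ⟨⟨(j : ℕ), hjlt⟩, ?_, ?_⟩
  · have : (⟨(j : ℕ), hjlt⟩ : Fin n).castSucc = j := by
      ext; simp
    rw [this]; exact hjmem
  · by_contra h
    push_neg at h
    have hmem : (⟨(j : ℕ), hjlt⟩ : Fin n).succ ∈
        (Finset.univ.filter (fun i : Fin (n + 1) => t i < d)) := by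
      simp only [Finset.mem_filter, Finset.mem_univ, true_and]; exact h
    have := Finset.le_max' _ _ hmem
    rw [← hj] at this
    have : ((⟨(j : ℕ), hjlt⟩ : Fin n).succ : ℕ) ≤ (j : ℕ) := this
    simp at this

lemma affine_fix {f : ℝ → ℝ} {s c a b u v : ℝ}
    (haff : ∀ w ∈ Set.Icc a b, f w = s * w + c)
    (hu : u ∈ Set.Icc a b) (hv : v ∈ Set.Icc a b) (huv : u ≠ v)
    (hfu : f u = u) (hfv : f v = v) : ∀ w ∈ Set.Icc a b, f w = w := by
  have e1 : s * u + c = u := by rw [← haff u hu]; exact hfu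
  have e2 : s * v + c = v := by rw [← haff v hv]; exact hfv
  have hs : (s - 1) * (u - v) = 0 := by ring_nf; nlinarith [e1, e2]
  have hs1 : s = 1 := by
    rcases mul_eq_zero.mp hs with h | h
    · linarith
    · exact absurd (by linarith : u = v) huv
  have hc0 : c = 0 := by rw [hs1] at e1; linarith
  intro w hw
  rw [haff w hw, hs1, hc0]; ring

lemma mono_finite_fix {S : Set ℝ} (hS : S.Finite) (f : ℝ → ℝ)
    (hmaps : ∀ u ∈ S, f u ∈ S) (hinj : Set.InjOn f S)
    (hmono : ∀ u ∈ S, ∀ v ∈ S, u < v → f u < f v) :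
    ∀ u ∈ S, f u = u := by
  intro u hu
  by_contra hne
  rcases lt_or_gt_of_ne hne with hlt | hgt
  · set T := {v ∈ S | v ≤ u} with hT
    set T' := {v ∈ S | v < u} with hT'
    have hTfin : T.Finite := hS.subset (fun v hv => hv.1)
    have hmapsT : ∀ v ∈ T, f v ∈ T' := by
      rintro v ⟨hvS, hvu⟩
      refine ⟨hmaps v hvS, ?_⟩
      rcases eq_or_lt_of_le hvu with rfl | h
      · exact hlt
      · exact lt_trans (hmono v hvS u hu h) hlt
    have h1 : (f '' T).ncard = T.ncard := Set.ncard_image_of_injOn (hinj.mono fun v hv => hv.1)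
    have h2 : (f '' T) ⊆ T' := by rintro _ ⟨v, hv, rfl⟩; exact hmapsT v hv
    have h3 : T' ⊂ T := by
      refine ⟨fun v hv => ⟨hv.1, le_of_lt hv.2⟩, fun hsub => ?_⟩
      exact lt_irrefl u (hsub ⟨hu, le_refl u⟩).2
    have h4 := Set.ncard_le_ncard h2 (hTfin.subset h3.1)
    have h5 := Set.ncard_lt_ncard h3 hTfin
    omega
  · set T := {v ∈ S | u ≤ v} with hT
    set T' := {v ∈ S | u < v} with hT'
    have hTfin : T.Finite := hS.subset (fun v hv => hv.1)
    have hmapsT : ∀ v ∈ T, f v ∈ T' := by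
      rintro v ⟨hvS, hvu⟩
      refine ⟨hmaps v hvS, ?_⟩
      rcases eq_or_lt_of_le hvu with rfl | h
      · exact hgt
      · exact lt_trans hgt (hmono u hu v hvS h)
    have h1 : (f '' T).ncard = T.ncard := Set.ncard_image_of_injOn (hinj.mono fun v hv => hv.1)
    have h2 : (f '' T) ⊆ T' := by rintro _ ⟨v, hv, rfl⟩; exact hmapsT v hv
    have h3 : T' ⊂ T := by
      refine ⟨fun v hv => ⟨hv.1, le_of_lt hv.2⟩, fun hsub => ?_⟩
      exact lt_irrefl u (hsub ⟨hu, le_refl u⟩).2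
    have h4 := Set.ncard_le_ncard h2 (hTfin.subset h3.1)
    have h5 := Set.ncard_lt_ncard h3 hTfin
    omega



lemma denseA (r : ℝ) (hr : 0 < r) (Λ : Subgroup PosReal) (hΛ : Λ ≠ ⊥)
    (A : AddSubgroup ℝ) (hrA : r ∈ A)
    (hΛA : ∀ s : PosReal, s ∈ Λ → ∀ a : ℝ, a ∈ A → (s : ℝ) * a ∈ A) :
    ∀ a b : ℝ, a < b → ∃ q ∈ (A : Set ℝ), a < q ∧ q < b := by
  obtain ⟨⟨s, hsΛ⟩, hs1⟩ := Subgroup.ne_bot_iff_exists_ne_one.mp hΛ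
  have hs1' : s ≠ 1 := by
    intro h; exact hs1 (Subtype.ext h)
  obtain ⟨σ, hσΛ, hσ1⟩ : ∃ σ : PosReal, σ ∈ Λ ∧ 1 < (σ : ℝ) := by
    rcases lt_trichotomy ((s : ℝ)) 1 with h | h | h
    · refine ⟨s⁻¹, inv_mem hsΛ, ?_⟩
      rw [Positive.coe_inv]
      exact (one_lt_inv₀ s.2).mpr h
    · exact absurd (Subtype.ext h) hs1'
    · exact ⟨s, hsΛ, h⟩
  have hpows : ∀ k : ℕ, ∃ g : PosReal, g ∈ Λ ∧ (g : ℝ) = ((σ : ℝ)⁻¹) ^ k := by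
    intro k
    induction k with
    | zero => exact ⟨1, one_mem Λ, by simp⟩
    | succ k ih =>
      obtain ⟨g, hg, hval⟩ := ih
      refine ⟨σ⁻¹ * g, mul_mem (inv_mem hσΛ) hg, ?_⟩
      rw [Positive.val_mul, Positive.coe_inv, hval, pow_succ]
      ring
  intro a b hab
  have hσ0 : (0 : ℝ) < (σ : ℝ) := σ.2
  have hσ1' : (0 : ℝ) < (σ : ℝ) - 1 := by linarith
  have hinvlt : (σ : ℝ)⁻¹ < 1 := inv_lt_one_of_one_lt₀ hσ1
  have hinvpos : 0 < (σ : ℝ)⁻¹ := inv_pos.mpr hσ0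
  obtain ⟨k, hk⟩ := exists_pow_lt_of_lt_one
    (x := (b - a) / (((σ : ℝ) - 1) * r)) (div_pos (by linarith) (mul_pos hσ1' hr)) hinvlt
  set ε : ℝ := ((σ : ℝ) - 1) * r * ((σ : ℝ)⁻¹) ^ k with hεdef
  have hε0 : 0 < ε := by positivity
  have hεb : ε < b - a := by
    rw [lt_div_iff₀ (by positivity)] at hk
    rw [hεdef]; nlinarith [hk]
  have hεA : ε ∈ A := by
    obtain ⟨g, hg, hval⟩ := hpows k
    have h1 : (σ : ℝ) * ((g : ℝ) * r) ∈ A := hΛA σ hσΛ _ (hΛA g hg r hrA)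
    have h2 : (g : ℝ) * r ∈ A := hΛA g hg r hrA
    have heq : ε = (σ : ℝ) * ((g : ℝ) * r) - (g : ℝ) * r := by rw [hεdef, hval]; ring
    rw [heq]; exact sub_mem h1 h2
  set m : ℤ := ⌊a / ε⌋ + 1 with hm
  refine ⟨(m : ℝ) * ε, ?_, ?_, ?_⟩
  · have := AddSubgroup.zsmul_mem A hεA m
    rwa [zsmul_eq_mul] at this
  · have h1 : a / ε < (m : ℝ) := by
      rw [hm]; push_cast; exact Int.lt_floor_add_one _
    exact (div_lt_iff₀ hε0).mp h1
  · have h1 : (⌊a / ε⌋ : ℝ) ≤ a / ε := Int.floor_le _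
    have h2 : a / ε * ε = a := div_mul_cancel₀ a (ne_of_gt hε0)
    have h3 : (m : ℝ) * ε ≤ a + ε := by
      rw [hm]; push_cast; nlinarith
    linarith


open Filter in
lemma component_id (r : ℝ) (x y : Equiv.Perm ℝ)
    (hxc : ContinuousOn x (Set.Ico 0 r))
    (hcomm : ∀ s : ℝ, x (y s) = y (x s))
    {n : ℕ} {t : Fin (n + 1) → ℝ} (ht : StrictMono t) (ht0 : t 0 = 0)
    (htl : t (Fin.last n) = r)
    (haff : ∀ i : Fin n, ∃ s c : ℝ,
      ∀ u ∈ Set.Icc (t i.castSucc) (t i.succ), y u = s * u + c)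
    {c d γ : ℝ} (hc0 : 0 ≤ c) (hdr : d ≤ r)
    (hγ : γ ∈ Set.Ioo c d)
    (hnofix : ∀ u ∈ Set.Ioo c d, x u ≠ u)
    (hmx : ∀ u ∈ Set.Ioo c d, x u ∈ Set.Ioo c d)
    (hmx' : ∀ u ∈ Set.Ioo c d, x.symm u ∈ Set.Ioo c d)
    (hyγ : y γ = γ) :
    ∀ u ∈ Set.Ioo c d, y u = u := by
  have hcd : c < d := lt_trans hγ.1 hγ.2
  have hsub : Set.Ioo c d ⊆ Set.Ico 0 r := fun u hu =>
    ⟨le_trans hc0 (le_of_lt hu.1), lt_of_lt_of_le hu.2 hdr⟩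
  -- constant sign of `x - id` on the component
  have hsign : (∀ u ∈ Set.Ioo c d, u < x u) ∨ (∀ u ∈ Set.Ioo c d, x u < u) := by
    by_cases hpos : ∀ u ∈ Set.Ioo c d, u < x u
    · exact Or.inl hpos
    · right
      push_neg at hpos
      obtain ⟨u₀, hu₀, hle⟩ := hpos
      have hu₀lt : x u₀ < u₀ := lt_of_le_of_ne hle (hnofix u₀ hu₀)
      intro u hu
      by_contra h
      have hult : u < x u := lt_of_le_of_ne (not_lt.mp h) (Ne.symm (hnofix u hu))
      have hIcc : ∀ a b : ℝ, a ∈ Set.Ioo c d → b ∈ Set.Ioo c d → a ≤ b →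
          Set.Icc a b ⊆ Set.Ioo c d := by
        intro a b ha hb _ w hw
        exact ⟨lt_of_lt_of_le ha.1 hw.1, lt_of_le_of_lt hw.2 hb.2⟩
      rcases le_total u u₀ with hord | hord
      · have hsubI := hIcc u u₀ hu hu₀ hord
        have hcont : ContinuousOn (fun w => x w - w) (Set.Icc u u₀) :=
          ((hxc.mono (fun w hw => hsub (hsubI hw))).sub continuousOn_id)
        have h0 : (0 : ℝ) ∈ Set.Icc (x u₀ - u₀) (x u - u) := ⟨by linarith, by linarith⟩
        obtain ⟨w, hw, hw0⟩ := intermediate_value_Icc' hord hcont h0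
        have hw0' : x w - w = 0 := hw0
        exact hnofix w (hsubI hw) (by linarith : x w = w)
      · have hsubI := hIcc u₀ u hu₀ hu hord
        have hcont : ContinuousOn (fun w => x w - w) (Set.Icc u₀ u) :=
          ((hxc.mono (fun w hw => hsub (hsubI hw))).sub continuousOn_id)
        have h0 : (0 : ℝ) ∈ Set.Icc (x u₀ - u₀) (x u - u) := ⟨by linarith, by linarith⟩
        obtain ⟨w, hw, hw0⟩ := intermediate_value_Icc hord hcont h0
        have hw0' : x w - w = 0 := hw0
        exact hnofix w (hsubI hw) (by linarith : x w = w)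
  -- package the "upward" map g
  obtain ⟨g, hginj, hgmaps, hgup, hgy, hrel⟩ :
      ∃ g : ℝ → ℝ, Function.Injective g ∧ (∀ u ∈ Set.Ioo c d, g u ∈ Set.Ioo c d) ∧
        (∀ u ∈ Set.Ioo c d, u < g u) ∧ (∀ s : ℝ, y (g s) = g (y s)) ∧
        ((∀ u : ℝ, g u = x u) ∨ (∀ u : ℝ, x (g u) = u)) := by
    rcases hsign with hp | hm
    · exact ⟨x, x.injective, hmx, hp, fun s => (hcomm s).symm, Or.inl fun u => rfl⟩
    · refine ⟨x.symm, x.symm.injective, hmx', ?_, ?_, Or.inr fun u => x.apply_symm_apply u⟩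
      · intro u hu
        have hw := hmx' u hu
        have := hm _ hw
        rwa [x.apply_symm_apply] at this
      · intro s
        apply x.injective
        rw [x.apply_symm_apply, hcomm, x.apply_symm_apply]
  -- iterates
  have hit : ∀ (m : ℕ) (s : ℝ), y (g^[m] s) = g^[m] (y s) := by
    intro m
    induction m with
    | zero => intro s; simp
    | succ m ih =>
      intro s
      rw [Function.iterate_succ_apply', Function.iterate_succ_apply', hgy, ih]
  have hvm : ∀ (m : ℕ) (u : ℝ), u ∈ Set.Ioo c d → g^[m] u ∈ Set.Ioo c d := by
    intro m
    induction m with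
    | zero => intro u hu; simpa using hu
    | succ m ih =>
      intro u hu
      rw [Function.iterate_succ_apply']
      exact hgmaps _ (ih u hu)
  have hvlt : ∀ (m : ℕ) (u : ℝ), u ∈ Set.Ioo c d → g^[m] u < g^[m + 1] u := by
    intro m u hu
    rw [Function.iterate_succ_apply']
    exact hgup _ (hvm m u hu)
  -- orbits accumulate at d
  have horb : ∀ u ∈ Set.Ioo c d, ∀ b : ℝ, b < d → ∃ m : ℕ, b < g^[m] u := by
    intro u hu b hb
    by_contra h
    push_neg at h
    set v : ℕ → ℝ := fun m => g^[m] u with hv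
    have hmono : StrictMono v := strictMono_nat_of_lt_succ (fun m => hvlt m u hu)
    have hbdd : BddAbove (Set.range v) := ⟨b, by rintro _ ⟨m, rfl⟩; exact h m⟩
    set L := ⨆ m, v m with hL
    have hLtend : Tendsto v atTop (nhds L) := tendsto_atTop_ciSup hmono.monotone hbdd
    have hvleL : ∀ m, v m ≤ L := fun m => le_ciSup hbdd m
    have hLb : L ≤ b := ciSup_le h
    have hv0 : v 0 = u := by simp [hv]
    have hLJ : L ∈ Set.Ioo c d :=
      ⟨lt_of_lt_of_le hu.1 (hv0 ▸ hvleL 0), lt_of_le_of_lt hLb hb⟩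
    have hxcw : ContinuousWithinAt x (Set.Ico 0 r) L := hxc.continuousWithinAt (hsub hLJ)
    have hvin : ∀ m, v m ∈ Set.Ico 0 r := fun m => hsub (hvm m u hu)
    have htend2 : Tendsto (fun m => x (v m)) atTop (nhds (x L)) :=
      hxcw.tendsto.comp (tendsto_nhdsWithin_iff.mpr ⟨hLtend, Eventually.of_forall hvin⟩)
    have hxL : x L = L := by
      rcases hrel with h1 | h2
      · have heq : (fun m => x (v m)) = fun m => v (m + 1) := by
          funext m
          rw [← h1 (v m)]
          exact (Function.iterate_succ_apply' g m u).symm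
        rw [heq] at htend2
        exact tendsto_nhds_unique htend2 (hLtend.comp (tendsto_add_atTop_nat 1))
      · have h3 : Tendsto (fun m => x (v (m + 1))) atTop (nhds (x L)) :=
          htend2.comp (tendsto_add_atTop_nat 1)
        have heq : (fun m => x (v (m + 1))) = v := by
          funext m
          show x (g^[m + 1] u) = g^[m] u
          rw [Function.iterate_succ_apply', h2]
        rw [heq] at h3
        exact tendsto_nhds_unique h3 hLtend
    exact hnofix L hLJ hxL
  -- the affine piece of `y` just left of `d`
  have h0d : (0 : ℝ) < d := lt_of_le_of_lt hc0 hcd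
  obtain ⟨j, hj1, hj2⟩ := exists_piece_left (t := t) (ht0 ▸ h0d) (htl ▸ hdr)
  have hmaxd : max (t j.castSucc) c < d := max_lt hj1 hcd
  obtain ⟨N, hN⟩ := horb γ hγ _ hmaxd
  set u₁ := g^[N] γ with hu₁
  set u₂ := g^[N + 1] γ with hu₂
  have hu₁J : u₁ ∈ Set.Ioo c d := hvm N γ hγ
  have hu₂J : u₂ ∈ Set.Ioo c d := hvm (N + 1) γ hγ
  have h12 : u₁ < u₂ := hvlt N γ hγ
  have hu₁fix : y u₁ = u₁ := by rw [hu₁, hit N γ, hyγ]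
  have hu₂fix : y u₂ = u₂ := by rw [hu₂, hit (N + 1) γ, hyγ]
  have hu₁mem : u₁ ∈ Set.Icc (t j.castSucc) (t j.succ) :=
    ⟨le_of_lt (lt_of_le_of_lt (le_max_left _ _) hN), le_trans (le_of_lt hu₁J.2) hj2⟩
  have hu₂mem : u₂ ∈ Set.Icc (t j.castSucc) (t j.succ) :=
    ⟨le_trans hu₁mem.1 (le_of_lt h12), le_trans (le_of_lt hu₂J.2) hj2⟩
  obtain ⟨s, cc, hscc⟩ := haff j
  have hpiece : ∀ w ∈ Set.Icc (t j.castSucc) (t j.succ), y w = w :=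
    affine_fix hscc hu₁mem hu₂mem (ne_of_lt h12) hu₁fix hu₂fix
  -- conclude for arbitrary u
  intro u hu
  obtain ⟨M, hM⟩ := horb u hu _ hmaxd
  have hMJ : g^[M] u ∈ Set.Ioo c d := hvm M u hu
  have hfixM : y (g^[M] u) = g^[M] u :=
    hpiece _ ⟨le_of_lt (lt_of_le_of_lt (le_max_left _ _) hM),
      le_trans (le_of_lt hMJ.2) hj2⟩
  have := hit M u
  rw [hfixM] at this
  exact (hginj.iterate M) this.symm

lemma cross_right (y : ℝ → ℝ) {n : ℕ} {t : Fin (n + 1) → ℝ}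
    (haff : ∀ i : Fin n, ∃ s c : ℝ,
      ∀ u ∈ Set.Icc (t i.castSucc) (t i.succ), y u = s * u + c)
    {a d : ℝ} (h0d : t 0 < d) (hdr : d ≤ t (Fin.last n))
    (hbreak : ∀ i, d ≠ t i) (had : a < d)
    (hid : ∀ u ∈ Set.Ioo a d, y u = u) :
    ∃ e, d < e ∧ ∀ u ∈ Set.Icc d e, y u = u := by
  obtain ⟨j, hj1, hj2⟩ := exists_piece_left (t := t) h0d hdr
  have hj2' : d < t j.succ := lt_of_le_of_ne hj2 (hbreak j.succ)
  have hmax : max (t j.castSucc) a < d := max_lt hj1 had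
  obtain ⟨u₂, hu₂⟩ := exists_between hmax
  obtain ⟨u₁, hu₁⟩ := exists_between hu₂.1
  have hu₁I : u₁ ∈ Set.Ioo a d :=
    ⟨lt_of_le_of_lt (le_max_right _ _) hu₁.1, lt_trans hu₁.2 hu₂.2⟩
  have hu₂I : u₂ ∈ Set.Ioo a d :=
    ⟨lt_of_le_of_lt (le_max_right _ _) hu₂.1, hu₂.2⟩
  have hu₁mem : u₁ ∈ Set.Icc (t j.castSucc) (t j.succ) :=
    ⟨le_of_lt (lt_of_le_of_lt (le_max_left _ _) hu₁.1),
      le_of_lt (lt_trans hu₁I.2 hj2')⟩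
  have hu₂mem : u₂ ∈ Set.Icc (t j.castSucc) (t j.succ) :=
    ⟨le_of_lt (lt_of_le_of_lt (le_max_left _ _) hu₂.1),
      le_of_lt (lt_trans hu₂I.2 hj2')⟩
  obtain ⟨s, cc, hscc⟩ := haff j
  have hpiece : ∀ w ∈ Set.Icc (t j.castSucc) (t j.succ), y w = w :=
    affine_fix hscc hu₁mem hu₂mem (ne_of_lt hu₁.2) (hid u₁ hu₁I) (hid u₂ hu₂I)
  refine ⟨t j.succ, hj2', fun u hu => hpiece u ⟨le_trans (le_of_lt hj1) hu.1, hu.2⟩⟩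

lemma cross_left (y : ℝ → ℝ) {n : ℕ} {t : Fin (n + 1) → ℝ}
    (haff : ∀ i : Fin n, ∃ s c : ℝ,
      ∀ u ∈ Set.Icc (t i.castSucc) (t i.succ), y u = s * u + c)
    {b c : ℝ} (h0c : t 0 ≤ c) (hcr : c < t (Fin.last n))
    (hbreak : ∀ i, c ≠ t i) (hcb : c < b)
    (hid : ∀ u ∈ Set.Ioo c b, y u = u) :
    ∃ e, e < c ∧ ∀ u ∈ Set.Icc e c, y u = u := by
  have h0c' : t 0 < c := lt_of_le_of_ne h0c (Ne.symm (hbreak 0))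
  obtain ⟨j, hj1, hj2⟩ := exists_piece_left (t := t) h0c' (le_of_lt hcr)
  have hj2' : c < t j.succ := lt_of_le_of_ne hj2 (hbreak j.succ)
  have hmin : c < min (t j.succ) b := lt_min hj2' hcb
  obtain ⟨u₁, hu₁⟩ := exists_between hmin
  obtain ⟨u₂, hu₂⟩ := exists_between hu₁.1
  have hu₂I : u₂ ∈ Set.Ioo c b :=
    ⟨hu₂.1, lt_of_lt_of_le (lt_trans hu₂.2 hu₁.2) (min_le_right _ _)⟩
  have hu₁I : u₁ ∈ Set.Ioo c b :=
    ⟨lt_trans hu₂.1 hu₂.2, lt_of_lt_of_le hu₁.2 (min_le_right _ _)⟩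
  have hu₁mem : u₁ ∈ Set.Icc (t j.castSucc) (t j.succ) :=
    ⟨le_of_lt (lt_trans hj1 hu₁I.1), le_of_lt (lt_of_lt_of_le hu₁.2 (min_le_left _ _))⟩
  have hu₂mem : u₂ ∈ Set.Icc (t j.castSucc) (t j.succ) :=
    ⟨le_of_lt (lt_trans hj1 hu₂.1),
      le_of_lt (lt_of_lt_of_le (lt_trans hu₂.2 hu₁.2) (min_le_left _ _))⟩
  obtain ⟨s, cc, hscc⟩ := haff j
  have hpiece : ∀ w ∈ Set.Icc (t j.castSucc) (t j.succ), y w = w :=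
    affine_fix hscc hu₁mem hu₂mem (ne_of_gt hu₂.2) (hid u₁ hu₁I) (hid u₂ hu₂I)
  exact ⟨t j.castSucc, hj1, fun u hu => hpiece u ⟨hu.1, le_trans hu.2 (le_of_lt hj2')⟩⟩


/-- Let `α, β ∈ [0, r] ∩ A` with `α < β`, `I = (α, β)`, and let
`x ∈ F_I(r, Λ, A)` satisfy `fix(x) ∩ I ∩ A = ∅`.  Then `fix(x) ∩ I` is finite, and every
element `y ≠ 1` of the centralizer of `x` in `F_I(r, Λ, A)` satisfies
`fix(y) ∩ I = fix(x) ∩ I`. -/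
theorem fixSet_inter_finite_and_centralizer_fixSet_eq
    (r : ℝ) (hr : 0 < r) (Λ : Subgroup PosReal) (hΛ : Λ ≠ ⊥)
    (A : AddSubgroup ℝ) (hrA : r ∈ A)
    (hΛA : ∀ s : PosReal, s ∈ Λ → ∀ a : ℝ, a ∈ A → (s : ℝ) * a ∈ A)
    (α β : ℝ) (hα : α ∈ Set.Icc (0 : ℝ) r) (hαA : α ∈ A)
    (hβ : β ∈ Set.Icc (0 : ℝ) r) (hβA : β ∈ A) (hαβ : α < β)
    (x : Equiv.Perm ℝ) (hx : MemFOn r Λ A (Set.Ioo α β) x)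
    (hfix : fixSet x ∩ Set.Ioo α β ∩ (A : Set ℝ) = ∅) :
    (fixSet x ∩ Set.Ioo α β).Finite ∧
    ∀ y : Equiv.Perm ℝ, MemFOn r Λ A (Set.Ioo α β) y → Commute x y → y ≠ 1 →
      fixSet y ∩ Set.Ioo α β = fixSet x ∩ Set.Ioo α β := by
  obtain ⟨⟨hxout, hxmono, hxcont, nx, tx, htx, htx0, htxl, htxA, htxA2, htxaff⟩, hxsupp⟩ := hx
  have hdense := denseA r hr Λ hΛ A hrA hΛA
  have hα0 : (0 : ℝ) ≤ α := hα.1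
  have hβr : β ≤ r := hβ.2
  have hIsub : Set.Ioo α β ⊆ Set.Ico 0 r := fun u hu =>
    ⟨le_trans hα0 (le_of_lt hu.1), lt_of_lt_of_le hu.2 hβr⟩
  have hnotmem : ∀ q : ℝ, q ∈ fixSet x → q ∈ Set.Ioo α β → q ∈ (A : Set ℝ) → False := by
    intro q h1 h2 h3
    have : q ∈ fixSet x ∩ Set.Ioo α β ∩ (A : Set ℝ) := ⟨⟨h1, h2⟩, h3⟩
    rw [hfix] at this
    exact this
  -- Part 1: finiteness
  have hFfin : (fixSet x ∩ Set.Ioo α β).Finite := by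
    have hcover : fixSet x ∩ Set.Ioo α β ⊆
        ⋃ i : Fin nx, (fixSet x ∩ Set.Ioo α β ∩ Set.Icc (tx i.castSucc) (tx i.succ)) := by
      intro u hu
      have h0u : tx 0 < u := by rw [htx0]; exact lt_of_le_of_lt hα0 hu.2.1
      have hur : u ≤ tx (Fin.last nx) := by
        rw [htxl]; exact le_of_lt (lt_of_lt_of_le hu.2.2 hβr)
      obtain ⟨i, hi1, hi2⟩ := exists_piece_left h0u hur
      exact Set.mem_iUnion.mpr ⟨i, hu, le_of_lt hi1, hi2⟩
    refine Set.Finite.subset (Set.finite_iUnion fun i => ?_) hcover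
    apply Set.Subsingleton.finite
    rintro u ⟨⟨hufix, huI⟩, huP⟩ v ⟨⟨hvfix, hvI⟩, hvP⟩
    obtain ⟨s, hsΛ, cc, hscc⟩ := htxaff i
    have e1 : (s : ℝ) * u + cc = u := by rw [← hscc u huP]; exact hufix
    have e2 : (s : ℝ) * v + cc = v := by rw [← hscc v hvP]; exact hvfix
    by_cases hs1 : (s : ℝ) = 1
    · exfalso
      have hcc : cc = 0 := by rw [hs1] at e1; linarith
      have hlt : max (tx i.castSucc) α < min (tx i.succ) β := by
        apply max_lt
        · exact lt_min (htx (Fin.castSucc_lt_succ : i.castSucc < i.succ)) (lt_of_le_of_lt huP.1 huI.2)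
        · exact lt_min (lt_of_lt_of_le huI.1 huP.2) hαβ
      obtain ⟨q, hqA, hq1, hq2⟩ := hdense _ _ hlt
      have hqP : q ∈ Set.Icc (tx i.castSucc) (tx i.succ) :=
        ⟨le_of_lt (lt_of_le_of_lt (le_max_left _ _) hq1),
          le_of_lt (lt_of_lt_of_le hq2 (min_le_left _ _))⟩
      have hqfix : x q = q := by rw [hscc q hqP, hs1, hcc]; ring
      have hqI : q ∈ Set.Ioo α β :=
        ⟨lt_of_le_of_lt (le_max_right _ _) hq1, lt_of_lt_of_le hq2 (min_le_right _ _)⟩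
      exact hnotmem q hqfix hqI hqA
    · have h3 : ((s : ℝ) - 1) * (u - v) = 0 := by nlinarith [e1, e2]
      rcases mul_eq_zero.mp h3 with h | h
      · exact absurd (by linarith : (s : ℝ) = 1) hs1
      · linarith
  refine ⟨hFfin, ?_⟩
  -- Part 2
  intro y hy hxy hy1
  obtain ⟨⟨hyout, hymono, hycont, ny, ty, hty, hty0, htyl, htyA, htyA2, htyaff⟩, hysupp⟩ := hy
  have hcomm : ∀ s : ℝ, x (y s) = y (x s) := by
    intro s
    have h := DFunLike.congr_fun hxy s
    simpa [Equiv.Perm.mul_apply] using h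
  have hyaff : ∀ i : Fin ny, ∃ s c : ℝ,
      ∀ u ∈ Set.Icc (ty i.castSucc) (ty i.succ), y u = s * u + c := by
    intro i; obtain ⟨s, _, c, h⟩ := htyaff i; exact ⟨(s : ℝ), c, h⟩
  have hxI : ∀ u ∈ Set.Ioo α β, x u ∈ Set.Ioo α β := by
    intro u hu
    by_cases h : x u = u
    · rw [h]; exact hu
    · refine hxsupp ?_
      show x (x u) ≠ x u
      intro hh
      exact h (x.injective hh)
  have hxsI : ∀ u ∈ Set.Ioo α β, x.symm u ∈ Set.Ioo α β := by
    intro u hu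
    by_cases h : x.symm u = u
    · rw [h]; exact hu
    · refine hxsupp ?_
      show x (x.symm u) ≠ x.symm u
      rw [x.apply_symm_apply]
      exact fun hh => h hh.symm
  have hyI : ∀ u ∈ Set.Ioo α β, y u ∈ Set.Ioo α β := by
    intro u hu
    by_cases h : y u = u
    · rw [h]; exact hu
    · refine hysupp ?_
      show y (y u) ≠ y u
      intro hh
      exact h (y.injective hh)
  have hxα : x α = α := by
    by_contra h
    exact lt_irrefl α (hxsupp h).1
  have hxβ : x β = β := by
    by_contra h
    exact lt_irrefl β (hxsupp h).2
  have hyoutI : ∀ u, u ∉ Set.Ioo α β → y u = u := by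
    intro u hu
    by_contra h
    exact hu (hysupp h)
  -- Step 1 : F ⊆ fix y
  have hyF : ∀ u ∈ fixSet x ∩ Set.Ioo α β, y u = u := by
    apply mono_finite_fix hFfin
    · rintro u ⟨hufix, huI⟩
      refine ⟨?_, hyI u huI⟩
      show x (y u) = y u
      rw [hcomm u, hufix]
    · exact y.injective.injOn
    · rintro u ⟨_, huI⟩ v ⟨_, hvI⟩ huv
      exact hymono (hIsub huI) (hIsub hvI) huv
  -- component machinery
  have hcomp : ∀ ξ ∈ Set.Ioo α β, x ξ ≠ ξ → y ξ = ξ →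
      ∃ c d : ℝ, α ≤ c ∧ c < ξ ∧ ξ < d ∧ d ≤ β ∧
        (∀ u ∈ Set.Ioo c d, y u = u) ∧
        (d ≠ β → d ∈ fixSet x ∩ Set.Ioo α β) ∧
        (c ≠ α → c ∈ fixSet x ∩ Set.Ioo α β) := by
    intro ξ hξ hxξ hyξ
    classical
    set SD : Set ℝ := insert β {w ∈ fixSet x ∩ Set.Ioo α β | ξ < w} with hSD
    have hSDfin : SD.Finite := (hFfin.subset (fun w hw => hw.1)).insert β
    have hSDne : SD.Nonempty := ⟨β, Set.mem_insert _ _⟩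
    set d := sInf SD with hd
    have hdmem : d ∈ SD := hSDne.csInf_mem hSDfin
    have hdβ : d ≤ β := csInf_le hSDfin.bddBelow (Set.mem_insert _ _)
    have hξd : ξ < d := by
      rcases hdmem with h | h
      · rw [h]; exact hξ.2
      · exact h.2
    have hdF : d ≠ β → d ∈ fixSet x ∩ Set.Ioo α β := by
      intro h
      rcases hdmem with h' | h'
      · exact absurd h' h
      · exact h'.1
    set SC : Set ℝ := insert α {w ∈ fixSet x ∩ Set.Ioo α β | w < ξ} with hSC
    have hSCfin : SC.Finite := (hFfin.subset (fun w hw => hw.1)).insert α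
    have hSCne : SC.Nonempty := ⟨α, Set.mem_insert _ _⟩
    set c := sSup SC with hc
    have hcmem : c ∈ SC := hSCne.csSup_mem hSCfin
    have hαc : α ≤ c := le_csSup hSCfin.bddAbove (Set.mem_insert _ _)
    have hcξ : c < ξ := by
      rcases hcmem with h | h
      · rw [h]; exact hξ.1
      · exact h.2
    have hcF : c ≠ α → c ∈ fixSet x ∩ Set.Ioo α β := by
      intro h
      rcases hcmem with h' | h'
      · exact absurd h' h
      · exact h'.1
    have hJI : Set.Ioo c d ⊆ Set.Ioo α β := fun u hu =>
      ⟨lt_of_le_of_lt hαc hu.1, lt_of_lt_of_le hu.2 hdβ⟩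
    have hnofix : ∀ u ∈ Set.Ioo c d, x u ≠ u := by
      intro u hu hfixu
      have huI : u ∈ Set.Ioo α β := hJI hu
      have hune : u ≠ ξ := fun h => hxξ (h ▸ hfixu)
      rcases lt_or_gt_of_ne hune with h | h
      · have : u ∈ SC := Set.mem_insert_of_mem _ ⟨⟨hfixu, huI⟩, h⟩
        exact absurd (le_csSup hSCfin.bddAbove this) (not_le.mpr hu.1)
      · have : u ∈ SD := Set.mem_insert_of_mem _ ⟨⟨hfixu, huI⟩, h⟩
        exact absurd (csInf_le hSDfin.bddBelow this) (not_le.mpr hu.2)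
    have hxc : x c = c := by
      by_cases h : c = α
      · rw [h]; exact hxα
      · exact (hcF h).1
    have hxd : x d = d := by
      by_cases h : d = β
      · rw [h]; exact hxβ
      · exact (hdF h).1
    have hcIco : c ∈ Set.Ico 0 r := ⟨le_trans hα0 hαc, lt_of_lt_of_le (lt_trans hcξ hξd) (le_trans hdβ hβr)⟩
    have hmx : ∀ u ∈ Set.Ioo c d, x u ∈ Set.Ioo c d := by
      intro u hu
      have huI := hJI hu
      have hxuI := hxI u huI
      constructor
      · have := hxmono hcIco (hIsub huI) hu.1
        rwa [hxc] at this
      · by_cases h : d = β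
        · rw [h]; exact hxuI.2
        · have hdIco : d ∈ Set.Ico 0 r :=
            ⟨le_trans hα0 (le_of_lt (hdF h).2.1), lt_of_lt_of_le (hdF h).2.2 hβr⟩
          have := hxmono (hIsub huI) hdIco hu.2
          rwa [hxd] at this
    have hmx' : ∀ u ∈ Set.Ioo c d, x.symm u ∈ Set.Ioo c d := by
      intro u hu
      have huI := hJI hu
      have hwI := hxsI u huI
      constructor
      · by_contra h
        push_neg at h
        have := hxmono.monotoneOn (hIsub hwI) hcIco h
        rw [hxc] at this
        have : x (x.symm u) ≤ c := this
        rw [x.apply_symm_apply] at this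
        exact absurd this (not_le.mpr hu.1)
      · by_contra h
        push_neg at h
        by_cases hdb : d = β
        · rw [hdb] at h
          exact absurd h (not_le.mpr hwI.2)
        · have hdIco : d ∈ Set.Ico 0 r :=
            ⟨le_trans hα0 (le_of_lt (hdF hdb).2.1), lt_of_lt_of_le (hdF hdb).2.2 hβr⟩
          have := hxmono.monotoneOn hdIco (hIsub hwI) h
          rw [hxd] at this
          have : d ≤ x (x.symm u) := this
          rw [x.apply_symm_apply] at this
          exact absurd this (not_le.mpr hu.2)
    have hid : ∀ u ∈ Set.Ioo c d, y u = u :=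
      component_id r x y hxcont hcomm hty hty0 htyl hyaff
        (le_trans hα0 hαc) (le_trans hdβ hβr) ⟨hcξ, hξd⟩ hnofix hmx hmx' hyξ
    exact ⟨c, d, hαc, hcξ, hξd, hdβ, hid, hdF, hcF⟩
  -- rightward propagation
  have RIGHT : ∀ k : ℕ, ∀ ξ, ξ ∈ Set.Ioo α β → x ξ ≠ ξ → y ξ = ξ →
      ((fixSet x ∩ Set.Ioo α β) ∩ Set.Ioo ξ β).ncard ≤ k →
      ∀ u, ξ ≤ u → u < β → y u = u := by
    intro k
    induction k with
    | zero =>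
      intro ξ hξ hxξ hyξ hcard u hu1 hu2
      obtain ⟨c, d, hαc, hcξ, hξd, hdβ, hid, hdF, _⟩ := hcomp ξ hξ hxξ hyξ
      have hdeq : d = β := by
        by_contra h
        have hdF' := hdF h
        have hmem : d ∈ (fixSet x ∩ Set.Ioo α β) ∩ Set.Ioo ξ β :=
          ⟨hdF', hξd, hdF'.2.2⟩
        have hempty : ((fixSet x ∩ Set.Ioo α β) ∩ Set.Ioo ξ β) = ∅ := by
          have hfin : ((fixSet x ∩ Set.Ioo α β) ∩ Set.Ioo ξ β).Finite :=
            hFfin.inter_of_left _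
          rw [← Set.ncard_eq_zero hfin]
          omega
        rw [hempty] at hmem
        exact hmem
      rcases eq_or_lt_of_le hu1 with rfl | hlt
      · exact hyξ
      · exact hid u ⟨lt_trans hcξ hlt, hdeq ▸ hu2⟩
    | succ k ih =>
      intro ξ hξ hxξ hyξ hcard u hu1 hu2
      obtain ⟨c, d, hαc, hcξ, hξd, hdβ, hid, hdF, _⟩ := hcomp ξ hξ hxξ hyξ
      by_cases hdeq : d = β
      · rcases eq_or_lt_of_le hu1 with rfl | hlt
        · exact hyξ
        · exact hid u ⟨lt_trans hcξ hlt, hdeq ▸ hu2⟩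
      · have hdF' := hdF hdeq
        have hdA : d ∉ (A : Set ℝ) := fun h => hnotmem d hdF'.1 hdF'.2 h
        have hbreak : ∀ i, d ≠ ty i := fun i h => hdA (h ▸ htyA i)
        have h0d : ty 0 < d := by
          rw [hty0]; exact lt_of_le_of_lt hα0 hdF'.2.1
        have hdr' : d ≤ ty (Fin.last ny) := by
          rw [htyl]; exact le_of_lt (lt_of_lt_of_le hdF'.2.2 hβr)
        obtain ⟨e, hde, hecross⟩ := cross_right y hyaff h0d hdr' hbreak (lt_trans hcξ hξd) hid
        have hmin : d < min e β := lt_min hde hdF'.2.2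
        obtain ⟨γ', hγ'⟩ := ((Set.Ioo_infinite hmin).diff hFfin).nonempty
        have hγ'1 : d < γ' := hγ'.1.1
        have hγ'2 : γ' < min e β := hγ'.1.2
        have hγ'I : γ' ∈ Set.Ioo α β :=
          ⟨lt_trans hdF'.2.1 hγ'1, lt_of_lt_of_le hγ'2 (min_le_right _ _)⟩
        have hxγ' : x γ' ≠ γ' := fun h => hγ'.2 ⟨h, hγ'I⟩
        have hyγ' : y γ' = γ' := hecross γ'
          ⟨le_of_lt hγ'1, le_of_lt (lt_of_lt_of_le hγ'2 (min_le_left _ _))⟩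
        have hcard' : ((fixSet x ∩ Set.Ioo α β) ∩ Set.Ioo γ' β).ncard ≤ k := by
          have hss : ((fixSet x ∩ Set.Ioo α β) ∩ Set.Ioo γ' β) ⊂
              ((fixSet x ∩ Set.Ioo α β) ∩ Set.Ioo ξ β) := by
            constructor
            · rintro w ⟨hw1, hw2, hw3⟩
              exact ⟨hw1, lt_trans (lt_trans hξd hγ'1) hw2, hw3⟩
            · intro hsubset
              have := hsubset ⟨hdF', hξd, hdF'.2.2⟩
              exact absurd this.2.1 (not_lt.mpr (le_of_lt hγ'1))
          have := Set.ncard_lt_ncard hss (hFfin.inter_of_left _)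
          omega
        rcases eq_or_lt_of_le hu1 with rfl | hξu
        · exact hyξ
        by_cases hud : u < d
        · exact hid u ⟨lt_trans hcξ hξu, hud⟩
        push_neg at hud
        by_cases huγ : u ≤ γ'
        · exact hecross u ⟨hud, le_trans huγ (le_of_lt (lt_of_lt_of_le hγ'2 (min_le_left _ _)))⟩
        · push_neg at huγ
          exact ih γ' hγ'I hxγ' hyγ' hcard' u (le_of_lt huγ) hu2
  -- leftward propagation
  have LEFT : ∀ k : ℕ, ∀ ξ, ξ ∈ Set.Ioo α β → x ξ ≠ ξ → y ξ = ξ →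
      ((fixSet x ∩ Set.Ioo α β) ∩ Set.Ioo α ξ).ncard ≤ k →
      ∀ u, α < u → u ≤ ξ → y u = u := by
    intro k
    induction k with
    | zero =>
      intro ξ hξ hxξ hyξ hcard u hu1 hu2
      obtain ⟨c, d, hαc, hcξ, hξd, hdβ, hid, _, hcF⟩ := hcomp ξ hξ hxξ hyξ
      have hceq : c = α := by
        by_contra h
        have hcF' := hcF h
        have hmem : c ∈ (fixSet x ∩ Set.Ioo α β) ∩ Set.Ioo α ξ :=
          ⟨hcF', hcF'.2.1, hcξ⟩
        have hempty : ((fixSet x ∩ Set.Ioo α β) ∩ Set.Ioo α ξ) = ∅ := by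
          have hfin : ((fixSet x ∩ Set.Ioo α β) ∩ Set.Ioo α ξ).Finite :=
            hFfin.inter_of_left _
          rw [← Set.ncard_eq_zero hfin]
          omega
        rw [hempty] at hmem
        exact hmem
      rcases eq_or_lt_of_le hu2 with rfl | hlt
      · exact hyξ
      · exact hid u ⟨hceq ▸ hu1, lt_trans hlt hξd⟩
    | succ k ih =>
      intro ξ hξ hxξ hyξ hcard u hu1 hu2
      obtain ⟨c, d, hαc, hcξ, hξd, hdβ, hid, _, hcF⟩ := hcomp ξ hξ hxξ hyξ
      by_cases hceq : c = α
      · rcases eq_or_lt_of_le hu2 with rfl | hlt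
        · exact hyξ
        · exact hid u ⟨hceq ▸ hu1, lt_trans hlt hξd⟩
      · have hcF' := hcF hceq
        have hcA : c ∉ (A : Set ℝ) := fun h => hnotmem c hcF'.1 hcF'.2 h
        have hbreak : ∀ i, c ≠ ty i := fun i h => hcA (h ▸ htyA i)
        have h0c : ty 0 ≤ c := by
          rw [hty0]; exact le_trans hα0 (le_of_lt hcF'.2.1)
        have hcr' : c < ty (Fin.last ny) := by
          rw [htyl]; exact lt_of_lt_of_le hcF'.2.2 hβr
        obtain ⟨e, hec, hecross⟩ := cross_left y hyaff h0c hcr' hbreak (lt_trans hcξ hξd) hid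
        have hmax : max e α < c := max_lt hec hcF'.2.1
        obtain ⟨γ', hγ'⟩ := ((Set.Ioo_infinite hmax).diff hFfin).nonempty
        have hγ'1 : max e α < γ' := hγ'.1.1
        have hγ'2 : γ' < c := hγ'.1.2
        have hγ'I : γ' ∈ Set.Ioo α β :=
          ⟨lt_of_le_of_lt (le_max_right _ _) hγ'1, lt_trans hγ'2 hcF'.2.2⟩
        have hxγ' : x γ' ≠ γ' := fun h => hγ'.2 ⟨h, hγ'I⟩
        have hyγ' : y γ' = γ' := hecross γ'
          ⟨le_of_lt (lt_of_le_of_lt (le_max_left _ _) hγ'1), le_of_lt hγ'2⟩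
        have hcard' : ((fixSet x ∩ Set.Ioo α β) ∩ Set.Ioo α γ').ncard ≤ k := by
          have hss : ((fixSet x ∩ Set.Ioo α β) ∩ Set.Ioo α γ') ⊂
              ((fixSet x ∩ Set.Ioo α β) ∩ Set.Ioo α ξ) := by
            constructor
            · rintro w ⟨hw1, hw2, hw3⟩
              exact ⟨hw1, hw2, lt_trans (lt_trans hw3 hγ'2) hcξ⟩
            · intro hsubset
              have := hsubset ⟨hcF', hcF'.2.1, hcξ⟩
              exact absurd this.2.2 (not_lt.mpr (le_of_lt hγ'2))
          have := Set.ncard_lt_ncard hss (hFfin.inter_of_left _)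
          omega
        rcases eq_or_lt_of_le hu2 with rfl | huξ
        · exact hyξ
        by_cases huc : c < u
        · exact hid u ⟨huc, lt_trans huξ hξd⟩
        push_neg at huc
        by_cases huγ : γ' ≤ u
        · exact hecross u ⟨le_trans (le_of_lt (lt_of_le_of_lt (le_max_left _ _) hγ'1)) huγ, huc⟩
        · push_neg at huγ
          exact ih γ' hγ'I hxγ' hyγ' hcard' u hu1 (le_of_lt huγ)
  -- conclusion
  apply Set.Subset.antisymm
  · rintro γ ⟨hyγ, hγI⟩
    by_contra hne
    have hxγ : x γ ≠ γ := fun h => hne ⟨h, hγI⟩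
    apply hy1
    apply Equiv.ext
    intro u
    show y u = u
    by_cases huI : u ∈ Set.Ioo α β
    · rcases le_total γ u with h | h
      · exact RIGHT _ γ hγI hxγ hyγ (le_refl _) u h huI.2
      · exact LEFT _ γ hγI hxγ hyγ (le_refl _) u huI.1 h
    · exact hyoutI u huI
  · rintro w ⟨hwfix, hwI⟩
    exact ⟨hyF w ⟨hwfix, hwI⟩, hwI⟩



end ThompsonStein
end
end
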